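/- arXiv:2508.10969 — 4 statements merged into one kernel-verified Lean document; each statement's English description precedes it below -/
import Mathlib

section
/- Let T be a standard Young tableau of shape λ with n boxes and let i ≥ 1. Then j ∈ {1,…,n} is a nonexcedance of prom_i(T) (i.e., there is no edge α → j with α < j) if and only if j lies in the first i rows of T. Consequently, a standard Young tableau of arbitrary shape is uniquely determined by its tuple of promotion digraphs. -/
open Classical

/-- A cell `(row, col)` (0-indexed) of a Young diagram. -/
abbrev Cell : Type := ℕ × ℕ

/-- The cell `c` lies in the Young diagram of the shape `lam`. -/
def inShape (lam : List ℕ) (c : Cell) : Prop := c.2 < lam.getD c.1 0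

/-- `lam` is an integer partition (weakly decreasing list of positive parts). -/
def IsPartition (lam : List ℕ) : Prop :=
  lam.Pairwise (· ≥ ·) ∧ ∀ x ∈ lam, 0 < x

/-- An increasing tableau of shape `lam` with entries in `{1,…,q}`
(rows and columns strictly increase); cells outside the shape carry `0`. -/
structure IncTab (lam : List ℕ) (q : ℕ) where
  entry : Cell → ℕ
  entry_pos : ∀ c, inShape lam c → 1 ≤ entry c
  entry_le : ∀ c, inShape lam c → entry c ≤ q
  row_strict : ∀ i j : ℕ, inShape lam (i, j + 1) → entry (i, j) < entry (i, j + 1)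
  col_strict : ∀ i j : ℕ, inShape lam (i + 1, j) → entry (i, j) < entry (i + 1, j)
  zero_outside : ∀ c, ¬ inShape lam c → entry c = 0

/-- A standard Young tableau: a bijective filling by `1, …, n` where `n = |lam|`. -/
def IsStandard (lam : List ℕ) (n : ℕ) (T : IncTab lam n) : Prop :=
  n = lam.sum ∧ ∀ v, 1 ≤ v → v ≤ n → ∃! c, inShape lam c ∧ T.entry c = v

/-- Every value of `{1,…,q}` appears in the tableau. -/
def Packed (lam : List ℕ) (q : ℕ) (T : IncTab lam q) : Prop :=
  ∀ v, 1 ≤ v → v ≤ q → ∃ c : Cell, inShape lam c ∧ T.entry c = v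

/-- During (K-)gromotion, a vacated box is recorded by the value `0` (a "bullet"). -/
def isBullet (lam : List ℕ) (f : Cell → ℕ) (c : Cell) : Prop :=
  inShape lam c ∧ f c = 0

/-- `c` carries value `v` and is adjacent (on its left or above) to a bullet box. -/
def inC (lam : List ℕ) (f : Cell → ℕ) (v : ℕ) (c : Cell) : Prop :=
  inShape lam c ∧ f c = v ∧
    ((1 ≤ c.2 ∧ isBullet lam f (c.1, c.2 - 1)) ∨ (1 ≤ c.1 ∧ isBullet lam f (c.1 - 1, c.2)))

/-- One K-jeu-de-taquin substep: simultaneously all boxes with value `v` adjacent to a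
bullet become bullets, and the bullets adjacent to them receive value `v`. -/
noncomputable def substep (lam : List ℕ) (v : ℕ) (f : Cell → ℕ) : Cell → ℕ :=
  fun c =>
    if inC lam f v c then 0
    else if isBullet lam f c ∧ (inC lam f v (c.1, c.2 + 1) ∨ inC lam f v (c.1 + 1, c.2)) then v
    else f c

/-- The `j`-th value of the cyclically shifted alphabet `(α < α+1 < … < q < 1 < … < α-1)`. -/
def cyc (q α j : ℕ) : ℕ := (α - 1 + j) % q + 1

/-- State of the gromotion slide (at stage `α` of the alphabet cycle) after `j` substeps;
the base case deletes the minimal letter `α` from the upper-left corner. -/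
noncomputable def iterSub (lam : List ℕ) (q α : ℕ) (f : Cell → ℕ) : ℕ → Cell → ℕ
  | 0 => fun c => if c = ((0, 0) : Cell) ∧ f c = α then 0 else f c
  | j + 1 => substep lam (cyc q α (j + 1)) (iterSub lam q α f j)

/-- One application of (K-)gromotion at stage `α`: slide, then fill the vacated boxes
with the removed letter `α` (now maximal in the cycled alphabet). -/
noncomputable def gromote (lam : List ℕ) (q α : ℕ) (f : Cell → ℕ) : Cell → ℕ :=
  fun c =>
    if inShape lam c ∧ iterSub lam q α f (q - 1) c = 0 then α
    else iterSub lam q α f (q - 1) c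

/-- The `k`-th iterate of (K-)gromotion (stages cycle through `1, …, q`). -/
noncomputable def gromIter (lam : List ℕ) (q : ℕ) (f : Cell → ℕ) : ℕ → Cell → ℕ
  | 0 => f
  | k + 1 => gromote lam q (k % q + 1) (gromIter lam q f k)

/-- In state `f`, the value `v` is about to move from row `i+1` to row `i` (1-indexed):
a bullet in (1-indexed) row `i` has the box below it about to slide up with value `v`. -/
def moveAt (lam : List ℕ) (f : Cell → ℕ) (v i : ℕ) : Prop :=
  ∃ c : Cell, isBullet lam f c ∧ c.1 + 1 = i ∧ inC lam f v (c.1 + 1, c.2)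

/-- Edge `α → β` of the `i`-th promotion digraph `prom_i(T)`:
during the `α`-th application of (K-)gromotion, value `β` moves from row `i+1` to row `i`. -/
def promEdge (lam : List ℕ) (q i : ℕ) (T : IncTab lam q) (α β : ℕ) : Prop :=
  1 ≤ α ∧ α ≤ q ∧
  ∃ j : ℕ, j + 1 ≤ q - 1 ∧ cyc q α (j + 1) = β ∧
    moveAt lam (iterSub lam q α (gromIter lam q T.entry (α - 1)) j) β i

/-- (K-)promotion: gromotion at stage `1` followed by the relabeling `v ↦ v - 1`,
with the removed letter (temporarily `1`) becoming `q`. -/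
noncomputable def kpromote (lam : List ℕ) (q : ℕ) (f : Cell → ℕ) : Cell → ℕ :=
  fun c =>
    if inShape lam c then
      (if gromote lam q 1 f c = 1 then q else gromote lam q 1 f c - 1)
    else 0

/-- Value `v` appears in (1-indexed) row `r` of the filling `f`. -/
def appearsRow (lam : List ℕ) (f : Cell → ℕ) (r v : ℕ) : Prop :=
  1 ≤ r ∧ ∃ j : ℕ, inShape lam (r - 1, j) ∧ f (r - 1, j) = v

/-- The letter of the lattice word at position `v`: the set of (1-indexed) rows
containing value `v`. -/
def rowSetW (lam : List ℕ) (f : Cell → ℕ) (v : ℕ) : Set ℕ :=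
  {r | appearsRow lam f r v}

/-- For a standard filling: the (1-indexed) row containing value `v`. -/
noncomputable def latticeRow (lam : List ℕ) (f : Cell → ℕ) (v : ℕ) : ℕ :=
  sInf {r | appearsRow lam f r v}

/-- Number of occurrences of letter `r` among the first `j` letters of the lattice word:
the number of values `v ≤ j` appearing in row `r`. -/
noncomputable def cnt (lam : List ℕ) (f : Cell → ℕ) (r j : ℕ) : ℕ :=
  ((Finset.Icc 1 j).filter fun v => appearsRow lam f r v).card

/-- `j` is a (1-)balance point of the lattice word of a two-row filling. -/
def isBalance (lam : List ℕ) (f : Cell → ℕ) (j : ℕ) : Prop :=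
  cnt lam f 1 j = cnt lam f 2 j

/-- `j` is a (1-)teetering point of the lattice word of a two-row filling. -/
def isTeeter (lam : List ℕ) (f : Cell → ℕ) (j : ℕ) : Prop :=
  appearsRow lam f 1 j ∧ appearsRow lam f 2 j ∧ cnt lam f 1 j = cnt lam f 2 j + 1

/-- A noncrossing perfect matching of `{1,…,n}`, as a symmetric relation. -/
def IsNCMatching (n : ℕ) (M : ℕ → ℕ → Prop) : Prop :=
  (∀ a b, M a b → 1 ≤ a ∧ a ≤ n ∧ 1 ≤ b ∧ b ≤ n ∧ a ≠ b) ∧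
  (∀ a b, M a b → M b a) ∧
  (∀ a, 1 ≤ a → a ≤ n → ∃! b, M a b) ∧
  (∀ a b x y, M a x → M b y → ¬ (a < b ∧ b < x ∧ x < y))

/-- Number of occurrences of letter `r` among positions `a, …, b` of the lattice word
of a standard two-row filling. -/
noncomputable def letterCnt (lam : List ℕ) (f : Cell → ℕ) (r a b : ℕ) : ℕ :=
  ((Finset.Icc a b).filter fun p => latticeRow lam f p = r).card

/-- Positions `a < b` are matched in the noncrossing matching of the lattice word:
`w_a = 1`, `w_b = 2`, the interval `[a,b]` is balanced, and every proper prefix of it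
has strictly more `1`s than `2`s (i.e. `b` is the nearest available `2` for `a`). -/
def matchRel (lam : List ℕ) (f : Cell → ℕ) (a b : ℕ) : Prop :=
  a < b ∧ latticeRow lam f a = 1 ∧ latticeRow lam f b = 2 ∧
  letterCnt lam f 1 a b = letterCnt lam f 2 a b ∧
  ∀ m, a ≤ m → m < b → letterCnt lam f 2 a m < letterCnt lam f 1 a m

/-- The (symmetrized) noncrossing matching associated to a two-row standard filling. -/
def symMatch (lam : List ℕ) (f : Cell → ℕ) (a b : ℕ) : Prop :=
  matchRel lam f a b ∨ matchRel lam f b a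

/-- A noncrossing set partition of `{1,…,q}`, encoded by its "same block" relation. -/
def IsNCPartition (q : ℕ) (R : ℕ → ℕ → Prop) : Prop :=
  (∀ a b, R a b → 1 ≤ a ∧ a ≤ q ∧ 1 ≤ b ∧ b ≤ q) ∧
  (∀ a, 1 ≤ a → a ≤ q → R a a) ∧
  (∀ a b, R a b → R b a) ∧
  (∀ a b c, R a b → R b c → R a c) ∧
  (∀ a b x y, a < x → x < b → b < y → R a b → R x y → R a x)

/-- The defining compatibility between a two-row increasing tableau (given by its
filling `f`) and its noncrossing set partition `R` (Pechenik): singleton blocks are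
the absent values; least elements of nontrivial blocks are the values appearing only
in the top row; greatest elements are the values appearing only in the bottom row;
middle elements are the values appearing in both rows. -/
def BlockCompat (lam : List ℕ) (q : ℕ) (f : Cell → ℕ) (R : ℕ → ℕ → Prop) : Prop :=
  ∀ v, 1 ≤ v → v ≤ q →
    ((∀ u, R v u → u = v) ↔ ¬ ∃ c : Cell, inShape lam c ∧ f c = v) ∧
    (((∃ u, R v u ∧ v < u) ∧ ∀ u, R v u → v ≤ u) ↔
      (appearsRow lam f 1 v ∧ ¬ appearsRow lam f 2 v)) ∧
    (((∃ u, R v u ∧ u < v) ∧ ∀ u, R v u → u ≤ v) ↔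
      (appearsRow lam f 2 v ∧ ¬ appearsRow lam f 1 v)) ∧
    (((∃ u, R v u ∧ u < v) ∧ (∃ u, R v u ∧ v < u)) ↔
      (appearsRow lam f 1 v ∧ appearsRow lam f 2 v))



/-! ### Auxiliary development -/

namespace NonExc

/-- cyclic order of value `v` relative to stage `α` -/
def ordv (n α v : ℕ) : ℕ := (v + n - α) % n

lemma ordv_eq {n α v : ℕ} (hα : 1 ≤ α) (hαn : α ≤ n) (hv : 1 ≤ v) (hvn : v ≤ n) :
    ordv n α v = if α ≤ v then v - α else v + n - α := by
  unfold ordv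
  split
  · rename_i h
    have h1 : v + n - α = (v - α) + n := by omega
    rw [h1, Nat.add_mod_right, Nat.mod_eq_of_lt (by omega)]
  · exact Nat.mod_eq_of_lt (by omega)

lemma ordv_lt {n α v : ℕ} (hα : 1 ≤ α) (hαn : α ≤ n) (hv : 1 ≤ v) (hvn : v ≤ n) :
    ordv n α v < n := by
  rw [ordv_eq hα hαn hv hvn]; split <;> omega

lemma ordv_self {n α : ℕ} (hα : 1 ≤ α) (hαn : α ≤ n) : ordv n α α = 0 := by
  rw [ordv_eq hα hαn hα hαn]; simp

lemma ordv_eq_zero {n α v : ℕ} (hα : 1 ≤ α) (hαn : α ≤ n) (hv : 1 ≤ v) (hvn : v ≤ n)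
    (h : ordv n α v = 0) : v = α := by
  rw [ordv_eq hα hαn hv hvn] at h; split at h <;> omega

lemma ordv_pos {n α v : ℕ} (hα : 1 ≤ α) (hαn : α ≤ n) (hv : 1 ≤ v) (hvn : v ≤ n)
    (h : v ≠ α) : 1 ≤ ordv n α v := by
  rcases Nat.eq_zero_or_pos (ordv n α v) with h0 | h0
  · exact absurd (ordv_eq_zero hα hαn hv hvn h0) h
  · exact h0

lemma ordv_inj {n α v w : ℕ} (hα : 1 ≤ α) (hαn : α ≤ n) (hv : 1 ≤ v) (hvn : v ≤ n)
    (hw : 1 ≤ w) (hwn : w ≤ n) (h : ordv n α v = ordv n α w) : v = w := by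
  rw [ordv_eq hα hαn hv hvn, ordv_eq hα hαn hw hwn] at h
  split at h <;> split at h <;> omega

lemma cyc_mem {q α j : ℕ} (hq : 1 ≤ q) : 1 ≤ cyc q α j ∧ cyc q α j ≤ q := by
  unfold cyc
  constructor
  · omega
  · have := Nat.mod_lt (α - 1 + j) hq; omega

lemma ordv_cyc {n α j : ℕ} (hα : 1 ≤ α) (hαn : α ≤ n) (hj : j < n) :
    ordv n α (cyc n α j) = j := by
  unfold ordv cyc
  have hn : 1 ≤ n := by omega
  have h1 : (α - 1 + j) % n < n := Nat.mod_lt _ hn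
  have h2 : (α - 1 + j) % n + 1 + n - α = (α - 1 + j) % n + (1 + n - α) := by omega
  rw [h2, Nat.mod_add_mod]
  have h3 : α - 1 + j + (1 + n - α) = j + n := by omega
  rw [h3, Nat.add_mod_right, Nat.mod_eq_of_lt hj]

lemma cyc_ordv {n α v : ℕ} (hα : 1 ≤ α) (hαn : α ≤ n) (hv : 1 ≤ v) (hvn : v ≤ n) :
    cyc n α (ordv n α v) = v := by
  have h := ordv_eq hα hαn hv hvn
  unfold cyc
  rw [h]
  split
  · rename_i hle
    have : α - 1 + (v - α) = v - 1 := by omega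
    rw [this, Nat.mod_eq_of_lt (by omega)]; omega
  · rename_i hlt
    have : α - 1 + (v + n - α) = (v - 1) + n := by omega
    rw [this, Nat.add_mod_right, Nat.mod_eq_of_lt (by omega)]; omega

/-- ord with respect to the next stage -/
lemma ordv_succ {n α v : ℕ} (hα : 1 ≤ α) (hαn : α ≤ n) (hv : 1 ≤ v) (hvn : v ≤ n) :
    ordv n (α % n + 1) v = if v = α then n - 1 else ordv n α v - 1 := by
  have hn : 1 ≤ n := by omega
  have hb : α % n + 1 ≤ n := by
    rcases Nat.lt_or_ge α n with h | h
    · rw [Nat.mod_eq_of_lt h]; omega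
    · have : α = n := by omega
      subst this; simp [Nat.mod_self]; omega
  rw [ordv_eq (by omega) hb hv hvn, ordv_eq hα hαn hv hvn]
  rcases Nat.lt_or_ge α n with h | h
  · rw [Nat.mod_eq_of_lt h]
    split <;> split <;> first | omega | (split <;> omega)
  · have : α = n := by omega
    subst this
    rw [Nat.mod_self]
    split <;> split <;> first | omega | (split <;> omega)

/-! ### Shape lemmas -/

lemma shape_left {lam : List ℕ} {r c c' : ℕ} (h : inShape lam (r, c)) (hc : c' ≤ c) :
    inShape lam (r, c') := by
  exact lt_of_le_of_lt hc h

lemma getD_antitone {lam : List ℕ} (hlam : IsPartition lam) {r r' : ℕ} (h : r ≤ r') :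
    lam.getD r' 0 ≤ lam.getD r 0 := by
  rcases Nat.lt_or_ge r' lam.length with h' | h'
  · have hr : r < lam.length := by omega
    rw [List.getD_eq_getElem _ _ h', List.getD_eq_getElem _ _ hr]
    rcases Nat.eq_or_lt_of_le h with rfl | hlt
    · exact le_refl _
    · exact List.pairwise_iff_get.mp hlam.1 ⟨r, hr⟩ ⟨r', h'⟩ hlt
  · have : lam.getD r' 0 = 0 := List.getD_eq_default _ _ h'
    rw [this]
    exact Nat.zero_le _

lemma shape_up {lam : List ℕ} (hlam : IsPartition lam) {r r' c : ℕ}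
    (h : inShape lam (r, c)) (hr : r' ≤ r) : inShape lam (r', c) := by
  exact lt_of_lt_of_le h (getD_antitone hlam hr)

end NonExc

namespace NonExc

/-- Shifted-standard filling at stage `α`. -/
structure SSF (lam : List ℕ) (n α : ℕ) (f : Cell → ℕ) : Prop where
  zero_out : ∀ c, ¬ inShape lam c → f c = 0
  mem : ∀ c, inShape lam c → 1 ≤ f c ∧ f c ≤ n
  exu : ∀ v, 1 ≤ v → v ≤ n → ∃! c, inShape lam c ∧ f c = v
  rowS : ∀ r c : ℕ, inShape lam (r, c + 1) →
    ordv n α (f (r, c)) < ordv n α (f (r, c + 1))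
  colS : ∀ r c : ℕ, inShape lam (r + 1, c) →
    ordv n α (f (r, c)) < ordv n α (f (r + 1, c))

lemma SSF.inj {lam n α f} (h : SSF lam n α f) {c d : Cell}
    (hc : inShape lam c) (hd : inShape lam d) (hv : f c = f d) : c = d := by
  obtain ⟨e, -, hu⟩ := h.exu (f c) (h.mem c hc).1 (h.mem c hc).2
  rw [hu c ⟨hc, rfl⟩, hu d ⟨hd, hv.symm⟩]

lemma SSF.corner {lam n α f} (hlam : IsPartition lam) (hα : 1 ≤ α) (hαn : α ≤ n)
    (h : SSF lam n α f) : inShape lam ((0, 0) : Cell) ∧ f (0, 0) = α := by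
  obtain ⟨⟨r, col⟩, ⟨hcs, hcv⟩, -⟩ := h.exu α hα hαn
  have hr : r = 0 := by
    by_contra hr
    have h1 : r - 1 + 1 = r := by omega
    have h2 := h.colS (r - 1) col (by rw [h1]; exact hcs)
    rw [h1, hcv, ordv_self hα hαn] at h2
    omega
  have hc : col = 0 := by
    by_contra hc
    have h1 : col - 1 + 1 = col := by omega
    have h2 := h.rowS r (col - 1) (by rw [h1]; exact hcs)
    rw [h1, hcv, ordv_self hα hαn] at h2
    omega
  subst hr hc
  exact ⟨hcs, hcv⟩

/-- Invariant for the intermediate states of the gromotion slide at stage `α`,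
after `j` substeps, with unique bullet `b`. -/
structure SInv (lam : List ℕ) (n α j : ℕ) (b : Cell) (g : Cell → ℕ) : Prop where
  bIn : inShape lam b
  bZero : g b = 0
  zero_out : ∀ c, ¬ inShape lam c → g c = 0
  mem : ∀ c, inShape lam c → c ≠ b → 1 ≤ g c ∧ g c ≤ n ∧ g c ≠ α
  inj : ∀ c d, inShape lam c → inShape lam d → g c ≠ 0 → g c = g d → c = d
  surj : ∀ v, 1 ≤ v → v ≤ n → v ≠ α → ∃ c, inShape lam c ∧ g c = v
  rowS : ∀ r c : ℕ, inShape lam (r, c + 1) → (r, c) ≠ b → (r, c + 1) ≠ b →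
    ordv n α (g (r, c)) < ordv n α (g (r, c + 1))
  colS : ∀ r c : ℕ, inShape lam (r + 1, c) → (r, c) ≠ b → (r + 1, c) ≠ b →
    ordv n α (g (r, c)) < ordv n α (g (r + 1, c))
  right_gt : inShape lam (b.1, b.2 + 1) → j < ordv n α (g (b.1, b.2 + 1))
  below_gt : inShape lam (b.1 + 1, b.2) → j < ordv n α (g (b.1 + 1, b.2))
  left_le : 1 ≤ b.2 → ordv n α (g (b.1, b.2 - 1)) ≤ j
  above_le : 1 ≤ b.1 → ordv n α (g (b.1 - 1, b.2)) ≤ j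

lemma SInv.bullet_iff {lam n α j b g} (h : SInv lam n α j b g) {c : Cell} :
    isBullet lam g c ↔ c = b := by
  constructor
  · rintro ⟨hcs, hcz⟩
    by_contra hcb
    have := (h.mem c hcs hcb).1
    omega
  · rintro rfl
    exact ⟨h.bIn, h.bZero⟩

end NonExc

namespace NonExc

lemma substep_lemma {lam : List ℕ} {n α : ℕ}
    (hlam : IsPartition lam) (hn : 1 ≤ n) (hα : 1 ≤ α) (hαn : α ≤ n)
    {j : ℕ} (hj : j + 1 ≤ n - 1) {b : Cell} {g : Cell → ℕ}
    (hb : SInv lam n α j b g) :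
    ∃ b' : Cell, SInv lam n α (j + 1) b' (substep lam (cyc n α (j + 1)) g) ∧
      ((b' = b ∧ ∀ c, substep lam (cyc n α (j + 1)) g c = g c) ∨
       ((b' = (b.1, b.2 + 1) ∨ b' = (b.1 + 1, b.2)) ∧ g b' = cyc n α (j + 1) ∧
         substep lam (cyc n α (j + 1)) g b = cyc n α (j + 1) ∧
         substep lam (cyc n α (j + 1)) g b' = 0 ∧
         ∀ c, c ≠ b → c ≠ b' → substep lam (cyc n α (j + 1)) g c = g c)) := by
  set w := cyc n α (j + 1) with hwdef
  have hw1 : 1 ≤ w := (cyc_mem hn).1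
  have hwn : w ≤ n := (cyc_mem hn).2
  have hordw : ordv n α w = j + 1 := ordv_cyc hα hαn (by omega)
  have hwa : w ≠ α := by
    intro h; rw [h, ordv_self hα hαn] at hordw; omega
  have hg' : ∀ c, substep lam w g c =
      if inC lam g w c then 0
      else if isBullet lam g c ∧ (inC lam g w (c.1, c.2 + 1) ∨ inC lam g w (c.1 + 1, c.2))
        then w else g c := fun c => rfl
  -- any cell in C is right or below the bullet
  have hinC : ∀ c : Cell, inC lam g w c →
      (c = (b.1, b.2 + 1) ∨ c = (b.1 + 1, b.2)) ∧ inShape lam c ∧ g c = w := by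
    rintro ⟨r, col⟩ ⟨hcs, hcv, hadj⟩
    refine ⟨?_, hcs, hcv⟩
    rcases hadj with ⟨h1, hbu⟩ | ⟨h1, hbu⟩
    · left
      have hbe := (hb.bullet_iff).mp hbu
      simp [Prod.ext_iff] at hbe ⊢
      simp at h1
      omega
    · right
      have hbe := (hb.bullet_iff).mp hbu
      simp [Prod.ext_iff] at hbe ⊢
      simp at h1
      omega
  have hinC2r : inShape lam (b.1, b.2 + 1) → g (b.1, b.2 + 1) = w →
      inC lam g w (b.1, b.2 + 1) := by
    intro h1 h2
    refine ⟨h1, h2, Or.inl ⟨by simp, ?_⟩⟩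
    simp only [Nat.add_sub_cancel]
    exact ⟨hb.bIn, hb.bZero⟩
  have hinC2b : inShape lam (b.1 + 1, b.2) → g (b.1 + 1, b.2) = w →
      inC lam g w (b.1 + 1, b.2) := by
    intro h1 h2
    refine ⟨h1, h2, Or.inr ⟨by simp, ?_⟩⟩
    simp only [Nat.add_sub_cancel]
    exact ⟨hb.bIn, hb.bZero⟩
  by_cases hcase : inC lam g w (b.1, b.2 + 1) ∨ inC lam g w (b.1 + 1, b.2)
  · -- the bullet moves
    have honce : ¬ (inC lam g w (b.1, b.2 + 1) ∧ inC lam g w (b.1 + 1, b.2)) := by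
      rintro ⟨h1, h2⟩
      have := hb.inj _ _ h1.1 h2.1 (by rw [h1.2.1]; omega) (by rw [h1.2.1, h2.2.1])
      simp [Prod.ext_iff] at this
    -- common argument for both directions, stated via a helper
    rcases hcase with hC | hC
    · -- c' = (b.1, b.2+1), horizontal move
      set c' : Cell := (b.1, b.2 + 1) with hc'def
      have hcIn : inShape lam c' := hC.1
      have hcw : g c' = w := hC.2.1
      have hc'b : c' ≠ b := by simp [hc'def, Prod.ext_iff] <;> omega
      have hnotC : ∀ c : Cell, c ≠ c' → ¬ inC lam g w c := by
        intro c hne hc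
        rcases (hinC c hc).1 with h | h
        · exact hne h
        · refine honce ⟨hC, ?_⟩
          rw [← h]; exact hc
      have hval_b : substep lam w g b = w := by
        rw [hg']
        rw [if_neg, if_pos]
        · exact ⟨⟨hb.bIn, hb.bZero⟩, Or.inl hC⟩
        · rintro ⟨-, h2, -⟩
          rw [hb.bZero] at h2
          omega
      have hval_c' : substep lam w g c' = 0 := by rw [hg', if_pos hC]
      have hval_other : ∀ c, c ≠ b → c ≠ c' → substep lam w g c = g c := by
        intro c hcb hcc
        rw [hg', if_neg (hnotC c hcc), if_neg]
        rintro ⟨hbul, -⟩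
        exact hcb ((hb.bullet_iff).mp hbul)
      refine ⟨c', ?_, Or.inr ⟨Or.inl rfl, hcw, hval_b, hval_c', hval_other⟩⟩
      constructor
      · exact hcIn
      · exact hval_c'
      ·
        intro c hc
        rw [hval_other c (fun h => hc (h ▸ hb.bIn)) (fun h => hc (h ▸ hcIn))]
        exact hb.zero_out c hc
      ·
        intro c hcs hne
        by_cases hcb : c = b
        · subst hcb; rw [hval_b]; exact ⟨hw1, hwn, hwa⟩
        · rw [hval_other c hcb hne]; exact hb.mem c hcs hcb
      ·
        intro c d hcs hds hcnz hcd
        rcases eq_or_ne c c' with rfl | hcc'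
        · rw [hval_c'] at hcnz; exact absurd rfl hcnz
        rcases eq_or_ne d c' with rfl | hdc'
        · rw [hval_c'] at hcd; exact absurd hcd hcnz
        rcases eq_or_ne c b with hcb | hcb
        · rcases eq_or_ne d b with hdb | hdb
          · rw [hcb, hdb]
          · rw [hcb, hval_b] at hcd
            rw [hval_other d hdb hdc'] at hcd
            exact absurd (hb.inj d c' hds hcIn (by omega) (by rw [← hcd, hcw])) hdc'
        · rcases eq_or_ne d b with hdb | hdb
          · rw [hdb, hval_b] at hcd
            rw [hval_other c hcb hcc'] at hcd
            exact absurd (hb.inj c c' hcs hcIn (by rw [hcd]; omega) (by rw [hcd, hcw])) hcc'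
          · rw [hval_other c hcb hcc'] at hcd hcnz
            rw [hval_other d hdb hdc'] at hcd
            exact hb.inj c d hcs hds hcnz hcd
      ·
        intro v h1 h2 h3
        obtain ⟨c, hcs, hcv⟩ := hb.surj v h1 h2 h3
        rcases eq_or_ne c c' with rfl | hcc
        · exact ⟨b, hb.bIn, by rw [hval_b, ← hcw, hcv]⟩
        · have hcb : c ≠ b := by
            intro h; rw [h, hb.bZero] at hcv; omega
          exact ⟨c, hcs, by rw [hval_other c hcb hcc]; exact hcv⟩
      ·
        intro r col hin h1 h2
        have hinL : inShape lam (r, col) := shape_left hin (by omega)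
        by_cases hcb : (r, col) = b
        · exfalso
          apply h2
          simp [hc'def, Prod.ext_iff] at hcb ⊢
          omega
        by_cases hdb : (r, col + 1) = b
        · have hbc : b.1 = r ∧ b.2 = col + 1 := by
            simp [Prod.ext_iff] at hdb; omega
          have hleft : (b.1, b.2 - 1) = ((r, col) : Cell) := by
            simp [Prod.ext_iff] <;> omega
          have hle := hb.left_le (by omega)
          rw [hleft] at hle
          rw [hdb, hval_b, hval_other _ hcb h1, hordw]
          omega
        · rw [hval_other _ hcb h1, hval_other _ hdb h2]
          exact hb.rowS r col hin hcb hdb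
      ·
        intro r col hin h1 h2
        have hinL : inShape lam (r, col) := shape_up hlam hin (by omega)
        by_cases hcb : (r, col) = b
        · -- below cell keeps its value; use below_gt and injectivity
          have hbc : b.1 = r ∧ b.2 = col := by
            simp [Prod.ext_iff] at hcb; omega
          have hdb : (r + 1, col) ≠ b := by
            simp [Prod.ext_iff] <;> omega
          have hdc : ((r + 1, col) : Cell) ≠ c' := by
            simp [hc'def, Prod.ext_iff] <;> omega
          rw [hcb, hval_b, hval_other _ hdb hdc, hordw]
          have hgt := hb.below_gt (by rw [hbc.1, hbc.2]; exact hin)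
          rw [hbc.1, hbc.2] at hgt
          have hne : ordv n α (g (r + 1, col)) ≠ j + 1 := by
            intro he
            have hv := hb.mem _ hin hdb
            have : g (r + 1, col) = w :=
              ordv_inj hα hαn hv.1 hv.2.1 hw1 hwn (by rw [he, hordw])
            have := hb.inj _ _ hin hcIn (by omega) (by rw [this, hcw])
            simp [hc'def, Prod.ext_iff] at this
            omega
          omega
        by_cases hdb : (r + 1, col) = b
        · have hbc : b.1 = r + 1 ∧ b.2 = col := by
            simp [Prod.ext_iff] at hdb; omega
          have habove : (b.1 - 1, b.2) = ((r, col) : Cell) := by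
            simp [Prod.ext_iff] <;> omega
          have hle := hb.above_le (by omega)
          rw [habove] at hle
          rw [hdb, hval_b, hval_other _ hcb h1, hordw]
          omega
        · rw [hval_other _ hcb h1, hval_other _ hdb h2]
          exact hb.colS r col hin hcb hdb
      ·
        intro hin
        have h1 : ((c'.1, c'.2 + 1) : Cell) = (b.1, b.2 + 1 + 1) := rfl
        rw [h1] at hin ⊢
        have hne1 : ((b.1, b.2 + 1 + 1) : Cell) ≠ b := by
          simp [Prod.ext_iff] <;> omega
        have hne2 : ((b.1, b.2 + 1 + 1) : Cell) ≠ c' := by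
          simp [hc'def, Prod.ext_iff] <;> omega
        rw [hval_other _ hne1 hne2]
        have := hb.rowS b.1 (b.2 + 1) hin hc'b hne1
        rw [hcw, hordw] at this
        exact this
      ·
        intro hin
        have h1 : ((c'.1 + 1, c'.2) : Cell) = (b.1 + 1, b.2 + 1) := rfl
        rw [h1] at hin ⊢
        have hne1 : ((b.1 + 1, b.2 + 1) : Cell) ≠ b := by
          simp [Prod.ext_iff] <;> omega
        have hne2 : ((b.1 + 1, b.2 + 1) : Cell) ≠ c' := by
          simp [hc'def, Prod.ext_iff] <;> omega
        rw [hval_other _ hne1 hne2]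
        have := hb.colS b.1 (b.2 + 1) hin hc'b hne1
        rw [hcw, hordw] at this
        exact this
      ·
        intro _
        have h1 : ((c'.1, c'.2 - 1) : Cell) = b := by
          simp [hc'def, Prod.ext_iff] <;> omega
        rw [h1, hval_b, hordw]
      ·
        intro hb1
        have hb1' : 1 ≤ b.1 := hb1
        have h1 : ((c'.1 - 1, c'.2) : Cell) = (b.1 - 1, b.2 + 1) := rfl
        rw [h1]
        have hne1 : ((b.1 - 1, b.2 + 1) : Cell) ≠ b := by
          simp [Prod.ext_iff] <;> omega
        have hne2 : ((b.1 - 1, b.2 + 1) : Cell) ≠ c' := by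
          simp [hc'def, Prod.ext_iff] <;> omega
        rw [hval_other _ hne1 hne2]
        have hin : inShape lam (b.1 - 1 + 1, b.2 + 1) := by
          have : b.1 - 1 + 1 = b.1 := by omega
          rw [this]; exact hcIn
        have := hb.colS (b.1 - 1) (b.2 + 1) hin hne1 (by
          have : b.1 - 1 + 1 = b.1 := by omega
          rw [this]; exact hc'b)
        have he : ((b.1 - 1 + 1, b.2 + 1) : Cell) = c' := by
          simp [hc'def, Prod.ext_iff] <;> omega
        rw [he, hcw, hordw] at this
        omega
    · -- c' = (b.1 + 1, b.2), vertical move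
      set c' : Cell := (b.1 + 1, b.2) with hc'def
      have hcIn : inShape lam c' := hC.1
      have hcw : g c' = w := hC.2.1
      have hc'b : c' ≠ b := by simp [hc'def, Prod.ext_iff] <;> omega
      have hnotC : ∀ c : Cell, c ≠ c' → ¬ inC lam g w c := by
        intro c hne hc
        rcases (hinC c hc).1 with h | h
        · refine honce ⟨?_, hC⟩
          rw [← h]; exact hc
        · exact hne h
      have hval_b : substep lam w g b = w := by
        rw [hg']
        rw [if_neg, if_pos]
        · exact ⟨⟨hb.bIn, hb.bZero⟩, Or.inr hC⟩
        · rintro ⟨-, h2, -⟩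
          rw [hb.bZero] at h2
          omega
      have hval_c' : substep lam w g c' = 0 := by rw [hg', if_pos hC]
      have hval_other : ∀ c, c ≠ b → c ≠ c' → substep lam w g c = g c := by
        intro c hcb hcc
        rw [hg', if_neg (hnotC c hcc), if_neg]
        rintro ⟨hbul, -⟩
        exact hcb ((hb.bullet_iff).mp hbul)
      refine ⟨c', ?_, Or.inr ⟨Or.inr rfl, hcw, hval_b, hval_c', hval_other⟩⟩
      constructor
      · exact hcIn
      · exact hval_c'
      ·
        intro c hc
        rw [hval_other c (fun h => hc (h ▸ hb.bIn)) (fun h => hc (h ▸ hcIn))]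
        exact hb.zero_out c hc
      ·
        intro c hcs hne
        by_cases hcb : c = b
        · subst hcb; rw [hval_b]; exact ⟨hw1, hwn, hwa⟩
        · rw [hval_other c hcb hne]; exact hb.mem c hcs hcb
      ·
        intro c d hcs hds hcnz hcd
        rcases eq_or_ne c c' with rfl | hcc'
        · rw [hval_c'] at hcnz; exact absurd rfl hcnz
        rcases eq_or_ne d c' with rfl | hdc'
        · rw [hval_c'] at hcd; exact absurd hcd hcnz
        rcases eq_or_ne c b with hcb | hcb
        · rcases eq_or_ne d b with hdb | hdb
          · rw [hcb, hdb]
          · rw [hcb, hval_b] at hcd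
            rw [hval_other d hdb hdc'] at hcd
            exact absurd (hb.inj d c' hds hcIn (by omega) (by rw [← hcd, hcw])) hdc'
        · rcases eq_or_ne d b with hdb | hdb
          · rw [hdb, hval_b] at hcd
            rw [hval_other c hcb hcc'] at hcd
            exact absurd (hb.inj c c' hcs hcIn (by rw [hcd]; omega) (by rw [hcd, hcw])) hcc'
          · rw [hval_other c hcb hcc'] at hcd hcnz
            rw [hval_other d hdb hdc'] at hcd
            exact hb.inj c d hcs hds hcnz hcd
      ·
        intro v h1 h2 h3
        obtain ⟨c, hcs, hcv⟩ := hb.surj v h1 h2 h3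
        rcases eq_or_ne c c' with rfl | hcc
        · exact ⟨b, hb.bIn, by rw [hval_b, ← hcw, hcv]⟩
        · have hcb : c ≠ b := by
            intro h; rw [h, hb.bZero] at hcv; omega
          exact ⟨c, hcs, by rw [hval_other c hcb hcc]; exact hcv⟩
      ·
        intro r col hin h1 h2
        have hinL : inShape lam (r, col) := shape_left hin (by omega)
        by_cases hcb : (r, col) = b
        · -- right cell keeps its value; use right_gt and injectivity
          have hbc : b.1 = r ∧ b.2 = col := by
            simp [Prod.ext_iff] at hcb; omega
          have hdb : (r, col + 1) ≠ b := by
            simp [Prod.ext_iff] <;> omega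
          have hdc : ((r, col + 1) : Cell) ≠ c' := by
            simp [hc'def, Prod.ext_iff] <;> omega
          rw [hcb, hval_b, hval_other _ hdb hdc, hordw]
          have hgt := hb.right_gt (by rw [hbc.1, hbc.2]; exact hin)
          rw [hbc.1, hbc.2] at hgt
          have hne : ordv n α (g (r, col + 1)) ≠ j + 1 := by
            intro he
            have hv := hb.mem _ hin hdb
            have : g (r, col + 1) = w :=
              ordv_inj hα hαn hv.1 hv.2.1 hw1 hwn (by rw [he, hordw])
            have := hb.inj _ _ hin hcIn (by omega) (by rw [this, hcw])
            simp [hc'def, Prod.ext_iff] at this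
            omega
          omega
        by_cases hdb : (r, col + 1) = b
        · have hbc : b.1 = r ∧ b.2 = col + 1 := by
            simp [Prod.ext_iff] at hdb; omega
          have hleft : (b.1, b.2 - 1) = ((r, col) : Cell) := by
            simp [Prod.ext_iff] <;> omega
          have hle := hb.left_le (by omega)
          rw [hleft] at hle
          rw [hdb, hval_b, hval_other _ hcb h1, hordw]
          omega
        · rw [hval_other _ hcb h1, hval_other _ hdb h2]
          exact hb.rowS r col hin hcb hdb
      ·
        intro r col hin h1 h2
        have hinL : inShape lam (r, col) := shape_up hlam hin (by omega)
        by_cases hcb : (r, col) = b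
        · exfalso
          apply h2
          simp [hc'def, Prod.ext_iff] at hcb ⊢
          omega
        by_cases hdb : (r + 1, col) = b
        · have hbc : b.1 = r + 1 ∧ b.2 = col := by
            simp [Prod.ext_iff] at hdb; omega
          have habove : (b.1 - 1, b.2) = ((r, col) : Cell) := by
            simp [Prod.ext_iff] <;> omega
          have hle := hb.above_le (by omega)
          rw [habove] at hle
          rw [hdb, hval_b, hval_other _ hcb h1, hordw]
          omega
        · rw [hval_other _ hcb h1, hval_other _ hdb h2]
          exact hb.colS r col hin hcb hdb
      ·
        intro hin
        have h1 : ((c'.1, c'.2 + 1) : Cell) = (b.1 + 1, b.2 + 1) := rfl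
        rw [h1] at hin ⊢
        have hne1 : ((b.1 + 1, b.2 + 1) : Cell) ≠ b := by
          simp [Prod.ext_iff] <;> omega
        have hne2 : ((b.1 + 1, b.2 + 1) : Cell) ≠ c' := by
          simp [hc'def, Prod.ext_iff] <;> omega
        rw [hval_other _ hne1 hne2]
        have := hb.rowS (b.1 + 1) b.2 hin hc'b hne1
        rw [hcw, hordw] at this
        exact this
      ·
        intro hin
        have h1 : ((c'.1 + 1, c'.2) : Cell) = (b.1 + 1 + 1, b.2) := rfl
        rw [h1] at hin ⊢
        have hne1 : ((b.1 + 1 + 1, b.2) : Cell) ≠ b := by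
          simp [Prod.ext_iff] <;> omega
        have hne2 : ((b.1 + 1 + 1, b.2) : Cell) ≠ c' := by
          simp [hc'def, Prod.ext_iff] <;> omega
        rw [hval_other _ hne1 hne2]
        have := hb.colS (b.1 + 1) b.2 hin hc'b hne1
        rw [hcw, hordw] at this
        exact this
      ·
        intro hc1
        have hc1' : 1 ≤ b.2 := hc1
        have h1 : ((c'.1, c'.2 - 1) : Cell) = (b.1 + 1, b.2 - 1) := rfl
        rw [h1]
        have hne1 : ((b.1 + 1, b.2 - 1) : Cell) ≠ b := by
          simp [Prod.ext_iff] <;> omega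
        have hne2 : ((b.1 + 1, b.2 - 1) : Cell) ≠ c' := by
          simp [hc'def, Prod.ext_iff] <;> omega
        rw [hval_other _ hne1 hne2]
        have hin : inShape lam (b.1 + 1, b.2 - 1 + 1) := by
          have : b.2 - 1 + 1 = b.2 := by omega
          rw [this]; exact hcIn
        have := hb.rowS (b.1 + 1) (b.2 - 1) hin hne1 (by
          have : b.2 - 1 + 1 = b.2 := by omega
          rw [this]; exact hc'b)
        have he : ((b.1 + 1, b.2 - 1 + 1) : Cell) = c' := by
          simp [hc'def, Prod.ext_iff] <;> omega
        rw [he, hcw, hordw] at this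
        omega
      ·
        intro _
        have h1 : ((c'.1 - 1, c'.2) : Cell) = b := by
          simp [hc'def, Prod.ext_iff] <;> omega
        rw [h1, hval_b, hordw]
  · -- no move: the substep is the identity
    push_neg at hcase
    have heq : ∀ c, substep lam w g c = g c := by
      intro c
      rw [hg', if_neg, if_neg]
      · rintro ⟨hbul, hor⟩
        have hcb := (hb.bullet_iff).mp hbul
        rw [hcb] at hor
        rcases hor with h | h
        · exact hcase.1 h
        · exact hcase.2 h
      · intro hc
        rcases (hinC c hc).1 with h | h
        · exact hcase.1 (h ▸ hc)
        · exact hcase.2 (h ▸ hc)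
    have heqf : substep lam w g = g := funext heq
    refine ⟨b, ?_, Or.inl ⟨rfl, heq⟩⟩
    rw [heqf]
    refine ⟨hb.bIn, hb.bZero, hb.zero_out, hb.mem, hb.inj, hb.surj, hb.rowS, hb.colS,
      ?_, ?_, fun h => le_trans (hb.left_le h) (by omega),
      fun h => le_trans (hb.above_le h) (by omega)⟩
    · intro hin
      have hgt := hb.right_gt hin
      have hne1 : ((b.1, b.2 + 1) : Cell) ≠ b := by
        simp [Prod.ext_iff] <;> omega
      have hne : ordv n α (g (b.1, b.2 + 1)) ≠ j + 1 := by
        intro he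
        have hv := hb.mem _ hin hne1
        have hgw : g (b.1, b.2 + 1) = w :=
          ordv_inj hα hαn hv.1 hv.2.1 hw1 hwn (by rw [he, hordw])
        exact hcase.1 (hinC2r hin hgw)
      omega
    · intro hin
      have hgt := hb.below_gt hin
      have hne1 : ((b.1 + 1, b.2) : Cell) ≠ b := by
        simp [Prod.ext_iff] <;> omega
      have hne : ordv n α (g (b.1 + 1, b.2)) ≠ j + 1 := by
        intro he
        have hv := hb.mem _ hin hne1
        have hgw : g (b.1 + 1, b.2) = w :=
          ordv_inj hα hαn hv.1 hv.2.1 hw1 hwn (by rw [he, hordw])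
        exact hcase.2 (hinC2b hin hgw)
      omega

end NonExc

namespace NonExc

lemma iterSub_zero {lam : List ℕ} {n α : ℕ} {f : Cell → ℕ} :
    ∀ c, iterSub lam n α f 0 c = if c = ((0, 0) : Cell) ∧ f c = α then 0 else f c :=
  fun _ => rfl

lemma iterSub_succ {lam : List ℕ} {n α j : ℕ} {f : Cell → ℕ} :
    iterSub lam n α f (j + 1) = substep lam (cyc n α (j + 1)) (iterSub lam n α f j) := rfl

lemma iterSub_inv {lam : List ℕ} {n α : ℕ} {f : Cell → ℕ}
    (hlam : IsPartition lam) (hn : 1 ≤ n) (hα : 1 ≤ α) (hαn : α ≤ n)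
    (hf : SSF lam n α f) :
    ∀ j, j ≤ n - 1 → ∃ b, SInv lam n α j b (iterSub lam n α f j) := by
  intro j
  induction j with
  | zero =>
    intro _
    obtain ⟨h00, hf00⟩ := hf.corner hlam hα hαn
    have hval0 : iterSub lam n α f 0 ((0, 0) : Cell) = 0 := by
      rw [iterSub_zero]; exact if_pos ⟨rfl, hf00⟩
    have hvalo : ∀ c : Cell, c ≠ ((0, 0) : Cell) → iterSub lam n α f 0 c = f c := by
      intro c hne
      rw [iterSub_zero]; exact if_neg (fun h => hne h.1)
    refine ⟨((0, 0) : Cell), ?_⟩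
    constructor
    · exact h00
    · exact hval0
    · intro c hc
      rw [hvalo c (fun h => hc (h ▸ h00))]
      exact hf.zero_out c hc
    · intro c hcs hne
      rw [hvalo c hne]
      refine ⟨(hf.mem c hcs).1, (hf.mem c hcs).2, ?_⟩
      intro h
      exact hne (hf.inj hcs h00 (by rw [h, hf00]))
    · intro c d hcs hds hcnz hcd
      have hcb : c ≠ ((0, 0) : Cell) := by
        intro h; rw [h, hval0] at hcnz; exact hcnz rfl
      have hdb : d ≠ ((0, 0) : Cell) := by
        intro h; rw [h, hval0] at hcd; rw [hvalo c hcb] at hcnz hcd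
        exact hcnz hcd
      rw [hvalo c hcb] at hcnz hcd
      rw [hvalo d hdb] at hcd
      exact hf.inj hcs hds hcd
    · intro v h1 h2 h3
      obtain ⟨c, ⟨hcs, hcv⟩, -⟩ := hf.exu v h1 h2
      have : c ≠ ((0, 0) : Cell) := by
        intro h; rw [h, hf00] at hcv; exact h3 hcv.symm
      exact ⟨c, hcs, by rw [hvalo c this]; exact hcv⟩
    · intro r col hin h1 h2
      rw [hvalo _ h1, hvalo _ h2]
      exact hf.rowS r col hin
    · intro r col hin h1 h2
      rw [hvalo _ h1, hvalo _ h2]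
      exact hf.colS r col hin
    · intro hin
      show 0 < ordv n α (iterSub lam n α f 0 ((0, 1) : Cell))
      have hin' : inShape lam ((0, 1) : Cell) := hin
      have hne : ((0, 1) : Cell) ≠ ((0, 0) : Cell) := by simp
      rw [hvalo _ hne]
      have hmem := hf.mem _ hin'
      have : f ((0, 1) : Cell) ≠ α := by
        intro h
        have := hf.inj hin' h00 (by rw [h, hf00])
        simp at this
      have := ordv_pos hα hαn hmem.1 hmem.2 this
      omega
    · intro hin
      show 0 < ordv n α (iterSub lam n α f 0 ((1, 0) : Cell))
      have hin' : inShape lam ((1, 0) : Cell) := hin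
      have hne : ((1, 0) : Cell) ≠ ((0, 0) : Cell) := by simp
      rw [hvalo _ hne]
      have hmem := hf.mem _ hin'
      have : f ((1, 0) : Cell) ≠ α := by
        intro h
        have := hf.inj hin' h00 (by rw [h, hf00])
        simp at this
      have := ordv_pos hα hαn hmem.1 hmem.2 this
      omega
    · intro h; simp at h
    · intro h; simp at h
  | succ j ih =>
    intro hj
    obtain ⟨b, hbinv⟩ := ih (by omega)
    obtain ⟨b', h', -⟩ := substep_lemma hlam hn hα hαn hj hbinv
    exact ⟨b', by rw [iterSub_succ]; exact h'⟩

lemma iterSub_track {lam : List ℕ} {n α : ℕ} {f : Cell → ℕ}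
    (hlam : IsPartition lam) (hn : 1 ≤ n) (hα : 1 ≤ α) (hαn : α ≤ n)
    (hf : SSF lam n α f) {v : ℕ} (hv1 : 1 ≤ v) (hvn : v ≤ n) (hva : v ≠ α)
    {c0 : Cell} (hc0 : inShape lam c0) (hc0v : f c0 = v) :
    ∀ j, j ≤ n - 1 → ∃ c : Cell, inShape lam c ∧ iterSub lam n α f j c = v ∧
      (j < ordv n α v → c = c0) ∧
      (c = c0 ∨ (c.1 = c0.1 ∧ c.2 + 1 = c0.2) ∨
        (c.2 = c0.2 ∧ c.1 + 1 = c0.1 ∧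
          moveAt lam (iterSub lam n α f (ordv n α v - 1)) v c0.1)) := by
  intro j
  induction j with
  | zero =>
    intro _
    refine ⟨c0, hc0, ?_, fun _ => rfl, Or.inl rfl⟩
    rw [iterSub_zero]
    rw [if_neg (fun h => hva (by rw [← hc0v, h.2]))]
    exact hc0v
  | succ j ih =>
    intro hj
    obtain ⟨c, hcs, hcv, himp, hdisj⟩ := ih (by omega)
    obtain ⟨b, hbinv⟩ := iterSub_inv hlam hn hα hαn hf j (by omega)
    obtain ⟨b', hinv', hdesc⟩ := substep_lemma hlam hn hα hαn hj hbinv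
    rcases hdesc with ⟨-, heq⟩ | ⟨hor, hgb', hvb, hvb', hother⟩
    · refine ⟨c, hcs, by rw [iterSub_succ, heq]; exact hcv, fun h => himp (by omega), hdisj⟩
    · by_cases hcb' : c = b'
      · -- the value v is the one that moves: new position is b
        have hvw : v = cyc n α (j + 1) := by rw [← hcv, hcb', hgb']
        have hordv : ordv n α v = j + 1 := by rw [hvw]; exact ordv_cyc hα hαn (by omega)
        have hcc0 : c = c0 := himp (by omega)
        have hc0b' : c0 = b' := by rw [← hcc0, hcb']
        have hnew : iterSub lam n α f (j + 1) b = v := by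
          rw [iterSub_succ, hvb, hvw]
        have hj' : ordv n α v - 1 = j := by omega
        rcases hor with hb'r | hb'b
        · -- horizontal: new cell b is left of c0
          refine ⟨b, hbinv.bIn, hnew, fun h => by omega, Or.inr (Or.inl ?_)⟩
          rw [hc0b', hb'r]
          exact ⟨rfl, rfl⟩
        · -- vertical: new cell b is above c0, record moveAt
          refine ⟨b, hbinv.bIn, hnew, fun h => by omega, Or.inr (Or.inr ?_)⟩
          have h1 : c0.1 = b.1 + 1 := by rw [hc0b', hb'b]
          have h2 : c0.2 = b.2 := by rw [hc0b', hb'b]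
          refine ⟨h2.symm, h1.symm, ?_⟩
          rw [hj']
          refine ⟨b, ⟨hbinv.bIn, hbinv.bZero⟩, h1.symm, ?_⟩
          have hb'in : inShape lam (b.1 + 1, b.2) := by rw [← hb'b]; exact hinv'.bIn
          refine ⟨hb'in, by rw [← hb'b, hgb', hvw], Or.inr ⟨by omega, ?_⟩⟩
          have : ((b.1 + 1 - 1, b.2) : Cell) = b := by simp
          rw [this]
          exact ⟨hbinv.bIn, hbinv.bZero⟩
      · have hcb : c ≠ b := by
          intro h; rw [h, hbinv.bZero] at hcv; omega
        refine ⟨c, hcs, by rw [iterSub_succ, hother c hcb hcb']; exact hcv,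
          fun h => himp (by omega), hdisj⟩

lemma gromote_desc {lam : List ℕ} {n α : ℕ} {f : Cell → ℕ}
    (hlam : IsPartition lam) (hn : 1 ≤ n) (hα : 1 ≤ α) (hαn : α ≤ n)
    (hf : SSF lam n α f) :
    ∃ b, SInv lam n α (n - 1) b (iterSub lam n α f (n - 1)) ∧
      ∀ c, gromote lam n α f c = if c = b then α else iterSub lam n α f (n - 1) c := by
  obtain ⟨b, hinv⟩ := iterSub_inv hlam hn hα hαn hf (n - 1) le_rfl
  refine ⟨b, hinv, ?_⟩
  intro c
  by_cases hcb : c = b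
  · subst hcb
    rw [if_pos rfl]
    show (if inShape lam c ∧ iterSub lam n α f (n - 1) c = 0 then α else _) = α
    rw [if_pos ⟨hinv.bIn, hinv.bZero⟩]
  · rw [if_neg hcb]
    show (if inShape lam c ∧ iterSub lam n α f (n - 1) c = 0 then α else _) = _
    rw [if_neg]
    rintro ⟨hcs, hc0⟩
    have := (hinv.mem c hcs hcb).1
    omega

lemma gromote_SSF {lam : List ℕ} {n α : ℕ} {f : Cell → ℕ}
    (hlam : IsPartition lam) (hn : 1 ≤ n) (hα : 1 ≤ α) (hαn : α ≤ n)
    (hf : SSF lam n α f) :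
    SSF lam n (α % n + 1) (gromote lam n α f) := by
  obtain ⟨b, hinv, hgr⟩ := gromote_desc hlam hn hα hαn hf
  have hα'n : α % n + 1 ≤ n := by
    have := Nat.mod_lt α hn
    omega
  have hshift : ∀ v, 1 ≤ v → v ≤ n →
      ordv n (α % n + 1) v = if v = α then n - 1 else ordv n α v - 1 :=
    fun v h1 h2 => ordv_succ hα hαn h1 h2
  constructor
  · intro c hc
    have hcb : c ≠ b := fun h => hc (h ▸ hinv.bIn)
    rw [hgr c, if_neg hcb]
    exact hinv.zero_out c hc
  · intro c hcs
    rw [hgr c]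
    by_cases hcb : c = b
    · rw [if_pos hcb]; omega
    · rw [if_neg hcb]
      have := hinv.mem c hcs hcb
      omega
  · intro v h1 h2
    by_cases hva : v = α
    · subst hva
      refine ⟨b, ⟨hinv.bIn, by rw [hgr b, if_pos rfl]⟩, ?_⟩
      rintro d ⟨hds, hdv⟩
      by_contra hdb
      rw [hgr d, if_neg hdb] at hdv
      exact (hinv.mem d hds hdb).2.2 hdv
    · obtain ⟨c, hcs, hcv⟩ := hinv.surj v h1 h2 hva
      have hcb : c ≠ b := by
        intro h; rw [h, hinv.bZero] at hcv; omega
      refine ⟨c, ⟨hcs, by rw [hgr c, if_neg hcb]; exact hcv⟩, ?_⟩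
      rintro d ⟨hds, hdv⟩
      have hdb : d ≠ b := by
        intro h; rw [h] at hdv; rw [hgr b, if_pos rfl] at hdv; exact hva hdv.symm
      rw [hgr d, if_neg hdb] at hdv
      exact hinv.inj d c hds hcs (by omega) (by rw [hdv, hcv])
  · intro r col hin
    have hinL : inShape lam (r, col) := shape_left hin (by omega)
    by_cases hcb : (r, col) = b
    · exfalso
      obtain ⟨hb1, hb2⟩ : b.1 = r ∧ b.2 = col := by simp [Prod.ext_iff] at hcb; omega
      have hin' : inShape lam (b.1, b.2 + 1) := by rw [hb1, hb2]; exact hin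
      have hgt := hinv.right_gt hin'
      have hne : ((b.1, b.2 + 1) : Cell) ≠ b := by simp [Prod.ext_iff] <;> omega
      have hmem := hinv.mem (b.1, b.2 + 1) hin' hne
      have hlt := ordv_lt hα hαn hmem.1 hmem.2.1
      omega
    by_cases hdb : (r, col + 1) = b
    · rw [hgr (r, col), if_neg hcb, hgr (r, col + 1), if_pos hdb]
      have hmem := hinv.mem _ hinL hcb
      rw [hshift _ hmem.1 hmem.2.1, hshift α hα hαn, if_pos rfl, if_neg hmem.2.2]
      have h1 := ordv_pos hα hαn hmem.1 hmem.2.1 hmem.2.2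
      have h2 := ordv_lt hα hαn hmem.1 hmem.2.1
      omega
    · rw [hgr (r, col), if_neg hcb, hgr (r, col + 1), if_neg hdb]
      have hm1 := hinv.mem _ hinL hcb
      have hm2 := hinv.mem _ hin hdb
      rw [hshift _ hm1.1 hm1.2.1, hshift _ hm2.1 hm2.2.1, if_neg hm1.2.2, if_neg hm2.2.2]
      have := hinv.rowS r col hin hcb hdb
      have h1 := ordv_pos hα hαn hm1.1 hm1.2.1 hm1.2.2
      omega
  · intro r col hin
    have hinL : inShape lam (r, col) := shape_up hlam hin (by omega)
    by_cases hcb : (r, col) = b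
    · exfalso
      obtain ⟨hb1, hb2⟩ : b.1 = r ∧ b.2 = col := by simp [Prod.ext_iff] at hcb; omega
      have hin' : inShape lam (b.1 + 1, b.2) := by rw [hb1, hb2]; exact hin
      have hgt := hinv.below_gt hin'
      have hne : ((b.1 + 1, b.2) : Cell) ≠ b := by simp [Prod.ext_iff] <;> omega
      have hmem := hinv.mem (b.1 + 1, b.2) hin' hne
      have hlt := ordv_lt hα hαn hmem.1 hmem.2.1
      omega
    by_cases hdb : (r + 1, col) = b
    · rw [hgr (r, col), if_neg hcb, hgr (r + 1, col), if_pos hdb]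
      have hmem := hinv.mem _ hinL hcb
      rw [hshift _ hmem.1 hmem.2.1, hshift α hα hαn, if_pos rfl, if_neg hmem.2.2]
      have h1 := ordv_pos hα hαn hmem.1 hmem.2.1 hmem.2.2
      have h2 := ordv_lt hα hαn hmem.1 hmem.2.1
      omega
    · rw [hgr (r, col), if_neg hcb, hgr (r + 1, col), if_neg hdb]
      have hm1 := hinv.mem _ hinL hcb
      have hm2 := hinv.mem _ hin hdb
      rw [hshift _ hm1.1 hm1.2.1, hshift _ hm2.1 hm2.2.1, if_neg hm1.2.2, if_neg hm2.2.2]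
      have := hinv.colS r col hin hcb hdb
      have h1 := ordv_pos hα hαn hm1.1 hm1.2.1 hm1.2.2
      omega

lemma standard_SSF {lam : List ℕ} {n : ℕ} {T : IncTab lam n}
    (hlam : IsPartition lam) (hn : 1 ≤ n) (hT : IsStandard lam n T) :
    SSF lam n 1 T.entry := by
  have hordeq : ∀ v, 1 ≤ v → v ≤ n → ordv n 1 v = v - 1 := by
    intro v h1 h2
    rw [ordv_eq (by omega) hn h1 h2, if_pos h1]
  constructor
  · exact T.zero_outside
  · exact fun c hc => ⟨T.entry_pos c hc, T.entry_le c hc⟩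
  · exact hT.2
  · intro r col hin
    have hinL : inShape lam (r, col) := shape_left hin (by omega)
    rw [hordeq _ (T.entry_pos _ hinL) (T.entry_le _ hinL),
      hordeq _ (T.entry_pos _ hin) (T.entry_le _ hin)]
    have h1 := T.row_strict r col hin
    have h2 := T.entry_pos _ hinL
    omega
  · intro r col hin
    have hinL : inShape lam (r, col) := shape_up hlam hin (by omega)
    rw [hordeq _ (T.entry_pos _ hinL) (T.entry_le _ hinL),
      hordeq _ (T.entry_pos _ hin) (T.entry_le _ hin)]
    have h1 := T.col_strict r col hin
    have h2 := T.entry_pos _ hinL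
    omega

lemma gromIter_SSF {lam : List ℕ} {n : ℕ} {f0 : Cell → ℕ}
    (hlam : IsPartition lam) (hn : 1 ≤ n) (hf0 : SSF lam n 1 f0) :
    ∀ k, k ≤ n - 1 → SSF lam n (k + 1) (gromIter lam n f0 k) := by
  intro k
  induction k with
  | zero => exact fun _ => hf0
  | succ k ih =>
    intro hk
    have hssf := ih (by omega)
    have hkm : k % n = k := Nat.mod_eq_of_lt (by omega)
    have hres := gromote_SSF hlam hn (α := k + 1) (by omega) (by omega) hssf
    have h2 : (k + 1) % n = k + 1 := Nat.mod_eq_of_lt (by omega)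
    rw [h2] at hres
    show SSF lam n (k + 1 + 1) (gromote lam n (k % n + 1) (gromIter lam n f0 k))
    rw [hkm]
    exact hres

end NonExc

namespace NonExc

lemma outer_track {lam : List ℕ} {n : ℕ} {T : IncTab lam n}
    (hlam : IsPartition lam) (hn : 1 ≤ n) (hT : IsStandard lam n T)
    {v : ℕ} (hv1 : 1 ≤ v) (hvn : v ≤ n) {c0 : Cell}
    (hc0 : inShape lam c0) (hc0v : T.entry c0 = v) :
    ∀ k, k ≤ v - 1 → ∃ c : Cell, inShape lam c ∧ gromIter lam n T.entry k c = v ∧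
      c.1 ≤ c0.1 ∧
      (∀ i, c.1 < i → i ≤ c0.1 → ∃ α, 1 ≤ α ∧ α ≤ k ∧ promEdge lam n i T α v) := by
  intro k
  induction k with
  | zero =>
    intro _
    exact ⟨c0, hc0, hc0v, le_refl _, fun i h1 h2 => absurd (lt_of_lt_of_le h1 h2) (lt_irrefl _)⟩
  | succ k ih =>
    intro hk
    obtain ⟨c, hcs, hcv, hcle, hedges⟩ := ih (by omega)
    have hssf : SSF lam n (k + 1) (gromIter lam n T.entry k) :=
      gromIter_SSF hlam hn (standard_SSF hlam hn hT) k (by omega)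
    have hα1 : 1 ≤ k + 1 := by omega
    have hαn : k + 1 ≤ n := by omega
    have hvα : v ≠ k + 1 := by omega
    obtain ⟨c', hc's, hc'v, -, hdisj⟩ :=
      iterSub_track hlam hn hα1 hαn hssf hv1 hvn hvα hcs hcv (n - 1) le_rfl
    -- value of gromote at c'
    obtain ⟨b, hinv, hgr⟩ := gromote_desc hlam hn hα1 hαn hssf
    have hc'b : c' ≠ b := by
      intro h; rw [h, hinv.bZero] at hc'v; omega
    have hnewv : gromIter lam n T.entry (k + 1) c' = v := by
      show gromote lam n (k % n + 1) (gromIter lam n T.entry k) c' = v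
      rw [Nat.mod_eq_of_lt (show k < n by omega), hgr c', if_neg hc'b]
      exact hc'v
    have hordb : 1 ≤ ordv n (k + 1) v := ordv_pos hα1 hαn hv1 hvn hvα
    have hordlt : ordv n (k + 1) v < n := ordv_lt hα1 hαn hv1 hvn
    rcases hdisj with heq | ⟨h1, h2⟩ | ⟨h1, h2, hmv⟩
    · subst heq
      exact ⟨c', hc's, hnewv, hcle, fun i ha hb =>
        (hedges i ha hb).imp (fun α h => ⟨h.1, by omega, h.2.2⟩)⟩
    · refine ⟨c', hc's, hnewv, by omega, ?_⟩
      intro i ha hb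
      exact (hedges i (by omega) hb).imp (fun α h => ⟨h.1, by omega, h.2.2⟩)
    · -- vertical move: new promotion edge at level c.1
      have hedge : promEdge lam n c.1 T (k + 1) v := by
        refine ⟨hα1, hαn, ordv n (k + 1) v - 1, by omega, ?_, ?_⟩
        · rw [show ordv n (k + 1) v - 1 + 1 = ordv n (k + 1) v by omega]
          exact cyc_ordv hα1 hαn hv1 hvn
        · rw [show k + 1 - 1 = k by omega]
          exact hmv
      refine ⟨c', hc's, hnewv, by omega, ?_⟩
      intro i ha hb
      rcases Nat.lt_or_ge c.1 i with hgt | hge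
      · exact (hedges i hgt hb).imp (fun α h => ⟨h.1, by omega, h.2.2⟩)
      · have heq : i = c.1 := by omega
        exact ⟨k + 1, by omega, le_refl _, heq ▸ hedge⟩

lemma part1 (lam : List ℕ) (hlam : IsPartition lam) (n : ℕ)
    (T : IncTab lam n) (hT : IsStandard lam n T)
    (i : ℕ) (hi : 1 ≤ i) (j : ℕ) (hj1 : 1 ≤ j) (hjn : j ≤ n) :
    (¬ ∃ α, α < j ∧ promEdge lam n i T α j) ↔
      ∃ c : Cell, inShape lam c ∧ T.entry c = j ∧ c.1 < i := by
  have hn : 1 ≤ n := le_trans hj1 hjn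
  obtain ⟨c0, ⟨hc0s, hc0v⟩, huniq⟩ := hT.2 j hj1 hjn
  constructor
  · intro hno
    refine ⟨c0, hc0s, hc0v, ?_⟩
    by_contra hge
    push_neg at hge
    obtain ⟨c, hcs, hcv, hcle, hedges⟩ :=
      outer_track hlam hn hT hj1 hjn hc0s hc0v (j - 1) le_rfl
    have hssf : SSF lam n j (gromIter lam n T.entry (j - 1)) := by
      have := gromIter_SSF hlam hn (standard_SSF hlam hn hT) (j - 1) (by omega)
      rwa [show j - 1 + 1 = j by omega] at this
    have hcor := hssf.corner hlam hj1 hjn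
    have hc00 : c = ((0, 0) : Cell) := hssf.inj hcs hcor.1 (by rw [hcv, hcor.2])
    have hc10 : c.1 = 0 := by rw [hc00]
    obtain ⟨α, hα1, hαk, hedge⟩ := hedges i (by omega) hge
    exact hno ⟨α, by omega, hedge⟩
  · rintro ⟨c, hcs, hcv, hlt⟩ ⟨α, hαj, hedge⟩
    obtain ⟨hα1, hαn, j', hj', hcyc, hmove⟩ := hedge
    obtain ⟨cb, hbul, hbi, hinCd⟩ := hmove
    have hssf : SSF lam n α (gromIter lam n T.entry (α - 1)) := by
      have := gromIter_SSF hlam hn (standard_SSF hlam hn hT) (α - 1) (by omega)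
      rwa [show α - 1 + 1 = α by omega] at this
    obtain ⟨c1, hc1s, hc1v, hc1le, -⟩ :=
      outer_track hlam hn hT hj1 hjn hcs hcv (α - 1) (by omega)
    obtain ⟨c2, hc2s, hc2v, -, hdisj⟩ :=
      iterSub_track hlam hn hα1 hαn hssf hj1 hjn (by omega) hc1s hc1v j' (by omega)
    have hrow : c2.1 ≤ c1.1 := by
      rcases hdisj with heq | ⟨ha, hb⟩ | ⟨ha, hb, -⟩
      · rw [heq]
      · omega
      · omega
    obtain ⟨hds, hdv, -⟩ := hinCd
    obtain ⟨b, hinv⟩ := iterSub_inv hlam hn hα1 hαn hssf j' (by omega)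
    have hceq : ((cb.1 + 1, cb.2) : Cell) = c2 :=
      hinv.inj _ _ hds hc2s (by rw [hdv]; omega) (by rw [hdv, hc2v])
    have hr2 : cb.1 + 1 = c2.1 := by rw [← hceq]
    omega

end NonExc

namespace NonExc

lemma row_lt {lam : List ℕ} {n : ℕ} (T : IncTab lam n) :
    ∀ (r m k : ℕ), k < m → inShape lam (r, m) → T.entry (r, k) < T.entry (r, m) := by
  intro r m
  induction m with
  | zero => intro k hk _; omega
  | succ m ih =>
    intro k hk hin
    rcases Nat.eq_or_lt_of_le (Nat.le_of_lt_succ hk) with heq | hlt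
    · rw [heq]; exact T.row_strict r m hin
    · exact lt_trans (ih k hlt (shape_left hin (by omega))) (T.row_strict r m hin)

lemma partition_ext : ∀ {lam lam' : List ℕ}, IsPartition lam → IsPartition lam' →
    (∀ r, lam.getD r 0 = lam'.getD r 0) → lam = lam' := by
  intro lam
  induction lam with
  | nil =>
    intro lam' _ h2 h
    cases lam' with
    | nil => rfl
    | cons a t =>
      have h0 := h 0
      simp at h0
      have := h2.2 a List.mem_cons_self
      omega
  | cons a t ih =>
    intro lam' h1 h2 h
    cases lam' with
    | nil =>
      have h0 := h 0
      simp at h0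
      have := h1.2 a List.mem_cons_self
      omega
    | cons a' t' =>
      have ha : a = a' := by have := h 0; simpa using this
      have ht : t = t' := by
        refine ih ⟨(List.pairwise_cons.mp h1.1).2, fun x hx => h1.2 x (List.mem_cons_of_mem a hx)⟩
          ⟨(List.pairwise_cons.mp h2.1).2, fun x hx => h2.2 x (List.mem_cons_of_mem a' hx)⟩
          (fun r => by have := h (r + 1); simpa using this)
      rw [ha, ht]

lemma getD_card {lam : List ℕ} {n : ℕ} {T : IncTab lam n}
    (hT : IsStandard lam n T) (r : ℕ) :
    ((Finset.Icc 1 n).filter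
      (fun v => ∃ c : Cell, inShape lam c ∧ T.entry c = v ∧ c.1 = r)).card
      = lam.getD r 0 := by
  classical
  have claimL : ∀ v (h : ∃ c : Cell, inShape lam c ∧ T.entry c = v ∧ c.1 = r),
      T.entry (r, h.choose.2) = v := by
    intro v h
    have hs := h.choose_spec
    have : ((r, h.choose.2) : Cell) = h.choose := by
      have h22 := hs.2.2
      simp [Prod.ext_iff, h22]
    rw [this]
    exact hs.2.1
  have claimR : ∀ (m : ℕ), m < lam.getD r 0 →
      ∀ (h : ∃ c : Cell, inShape lam c ∧ T.entry c = T.entry (r, m) ∧ c.1 = r),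
      h.choose.2 = m := by
    intro m hm h
    have hs := h.choose_spec
    have hin : inShape lam ((r, m) : Cell) := hm
    obtain ⟨e, -, hu⟩ := hT.2 (T.entry (r, m)) (T.entry_pos _ hin) (T.entry_le _ hin)
    have h1 : h.choose = e := hu _ ⟨hs.1, hs.2.1⟩
    have h2 : ((r, m) : Cell) = e := hu _ ⟨hin, rfl⟩
    have : h.choose = ((r, m) : Cell) := by rw [h1, ← h2]
    rw [this]
  rw [← Finset.card_range (lam.getD r 0)]
  refine Finset.card_bij'
    (fun v hv => ((Finset.mem_filter.mp hv).2).choose.2)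
    (fun m hm => T.entry (r, m)) ?_ ?_ ?_ ?_
  · intro v hv
    have hs := ((Finset.mem_filter.mp hv).2).choose_spec
    rw [Finset.mem_range]
    have h1 : ((Finset.mem_filter.mp hv).2).choose.2
        < lam.getD ((Finset.mem_filter.mp hv).2).choose.1 0 := hs.1
    rw [hs.2.2] at h1
    exact h1
  · intro m hm
    rw [Finset.mem_range] at hm
    have hin : inShape lam ((r, m) : Cell) := hm
    rw [Finset.mem_filter]
    exact ⟨Finset.mem_Icc.mpr ⟨T.entry_pos _ hin, T.entry_le _ hin⟩, ⟨(r, m), hin, rfl, rfl⟩⟩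
  · intro v hv
    exact claimL v _
  · intro m hm
    rw [Finset.mem_range] at hm
    exact claimR m hm _

lemma part2 (lam : List ℕ) (hlam : IsPartition lam) (n : ℕ)
    (T : IncTab lam n) (hT : IsStandard lam n T)
    (lam' : List ℕ) (hlam' : IsPartition lam') (T' : IncTab lam' n) (hT' : IsStandard lam' n T')
    (hEq : ∀ i α β, promEdge lam n i T α β ↔ promEdge lam' n i T' α β) :
    lam = lam' ∧ T.entry = T'.entry := by
  classical
  -- rows of each value agree
  have hrow : ∀ v, 1 ≤ v → v ≤ n → ∀ (c c' : Cell), inShape lam c → T.entry c = v →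
      inShape lam' c' → T'.entry c' = v → c.1 = c'.1 := by
    intro v h1 h2 c c' hcs hcv hcs' hcv'
    have key : ∀ i, 1 ≤ i → (c.1 < i ↔ c'.1 < i) := by
      intro i hi
      have hA := part1 lam hlam n T hT i hi v h1 h2
      have hB := part1 lam' hlam' n T' hT' i hi v h1 h2
      have hcell : (∃ d : Cell, inShape lam d ∧ T.entry d = v ∧ d.1 < i) ↔ c.1 < i := by
        constructor
        · rintro ⟨d, hds, hdv, hdlt⟩
          obtain ⟨e, -, hu⟩ := hT.2 v h1 h2
          have hde : d = e := hu d ⟨hds, hdv⟩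
          have hce : c = e := hu c ⟨hcs, hcv⟩
          rw [hce, ← hde]
          exact hdlt
        · intro h; exact ⟨c, hcs, hcv, h⟩
      have hcell' : (∃ d : Cell, inShape lam' d ∧ T'.entry d = v ∧ d.1 < i) ↔ c'.1 < i := by
        constructor
        · rintro ⟨d, hds, hdv, hdlt⟩
          obtain ⟨e, -, hu⟩ := hT'.2 v h1 h2
          have hde : d = e := hu d ⟨hds, hdv⟩
          have hce : c' = e := hu c' ⟨hcs', hcv'⟩
          rw [hce, ← hde]
          exact hdlt
        · intro h; exact ⟨c', hcs', hcv', h⟩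
      rw [← hcell, ← hA, ← hcell', ← hB]
      constructor
      · rintro h ⟨a, ha, he⟩
        exact h ⟨a, ha, (hEq i a v).mpr he⟩
      · rintro h ⟨a, ha, he⟩
        exact h ⟨a, ha, (hEq i a v).mp he⟩
    have k1 := key (c.1 + 1) (by omega)
    have k2 := key (c'.1 + 1) (by omega)
    omega
  -- the row filters agree
  have hfil : ∀ r : ℕ,
      ((Finset.Icc 1 n).filter
        (fun v => ∃ c : Cell, inShape lam c ∧ T.entry c = v ∧ c.1 = r)) =
      ((Finset.Icc 1 n).filter
        (fun v => ∃ c : Cell, inShape lam' c ∧ T'.entry c = v ∧ c.1 = r)) := by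
    intro r
    apply Finset.filter_congr
    intro v hv
    rw [Finset.mem_Icc] at hv
    constructor
    · rintro ⟨c, hcs, hcv, hc1⟩
      obtain ⟨c', ⟨hcs', hcv'⟩, -⟩ := hT'.2 v hv.1 hv.2
      exact ⟨c', hcs', hcv', by rw [← hrow v hv.1 hv.2 c c' hcs hcv hcs' hcv']; exact hc1⟩
    · rintro ⟨c', hcs', hcv', hc1⟩
      obtain ⟨c, ⟨hcs, hcv⟩, -⟩ := hT.2 v hv.1 hv.2
      exact ⟨c, hcs, hcv, by rw [hrow v hv.1 hv.2 c c' hcs hcv hcs' hcv']; exact hc1⟩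
  have hgetD : ∀ r, lam.getD r 0 = lam'.getD r 0 := by
    intro r
    rw [← getD_card hT r, ← getD_card hT' r, hfil r]
  have hll : lam = lam' := partition_ext hlam hlam' hgetD
  subst hll
  refine ⟨rfl, ?_⟩
  funext c
  by_cases hcs : inShape lam c
  · set r := c.1 with hr
    set L := lam.getD r 0 with hL
    have hm : c.2 < L := hcs
    set s := ((Finset.Icc 1 n).filter
      (fun v => ∃ d : Cell, inShape lam d ∧ T.entry d = v ∧ d.1 = r)) with hs
    have hcard : s.card = L := getD_card hT r
    have hfs : ∀ x : Fin L, T.entry (r, (x : ℕ)) ∈ s := by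
      intro x
      have hin : inShape lam ((r, (x : ℕ)) : Cell) := x.2
      rw [hs, Finset.mem_filter]
      exact ⟨Finset.mem_Icc.mpr ⟨T.entry_pos _ hin, T.entry_le _ hin⟩,
        ⟨(r, (x : ℕ)), hin, rfl, rfl⟩⟩
    have hfs' : ∀ x : Fin L, T'.entry (r, (x : ℕ)) ∈ s := by
      intro x
      have hin : inShape lam ((r, (x : ℕ)) : Cell) := x.2
      rw [hs, hfil r, Finset.mem_filter]
      exact ⟨Finset.mem_Icc.mpr ⟨T'.entry_pos _ hin, T'.entry_le _ hin⟩,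
        ⟨(r, (x : ℕ)), hin, rfl, rfl⟩⟩
    have hmono : StrictMono (fun x : Fin L => T.entry (r, (x : ℕ))) := by
      intro x y hxy
      exact row_lt T r (y : ℕ) (x : ℕ) hxy y.2
    have hmono' : StrictMono (fun x : Fin L => T'.entry (r, (x : ℕ))) := by
      intro x y hxy
      exact row_lt T' r (y : ℕ) (x : ℕ) hxy y.2
    have h1 := congrFun (Finset.orderEmbOfFin_unique hcard hfs hmono) ⟨c.2, hm⟩
    have h2 := congrFun (Finset.orderEmbOfFin_unique hcard hfs' hmono') ⟨c.2, hm⟩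
    have hfinal := h1.trans h2.symm
    exact hfinal
  · rw [T.zero_outside c hcs, T'.zero_outside c hcs]

end NonExc


/-- `j` is a nonexcedance of `prom_i(T)` iff `j` lies in the first `i` rows
of `T`; consequently a standard Young tableau of arbitrary shape is uniquely determined
by its tuple of promotion digraphs. -/
theorem nonexcedances_are_first_rows
    (lam : List ℕ) (hlam : IsPartition lam) (n : ℕ)
    (T : IncTab lam n) (hT : IsStandard lam n T) :
    (∀ i, 1 ≤ i → ∀ j, 1 ≤ j → j ≤ n →
      ((¬ ∃ α, α < j ∧ promEdge lam n i T α j) ↔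
        ∃ c : Cell, inShape lam c ∧ T.entry c = j ∧ c.1 < i)) ∧
    (∀ lam' : List ℕ, IsPartition lam' → ∀ T' : IncTab lam' n, IsStandard lam' n T' →
      (∀ i α β, promEdge lam n i T α β ↔ promEdge lam' n i T' α β) →
      lam = lam' ∧ T.entry = T'.entry) := by
  constructor
  · intro i hi j hj1 hjn
    exact NonExc.part1 lam hlam n T hT i hi j hj1 hjn
  · intro lam' hlam' T' hT' hEq
    exact NonExc.part2 lam hlam n T hT lam' hlam' T' hT' hEq
end

section
/- Let w = w_1…w_n be the lattice word of a standard Young tableau T of shape λ. Define j_0 = 1 and, inductively, j_i to be the smallest index greater than j_{i−1} at which the prefix w_1…w_{j_i} contains equally many letters i and i+1 (if such an index exists). Then there is some k ≤ ℓ(λ)−1 such that j_i exists exactly for i ≤ k, and the sequence 1 < j_1 < j_2 < … < j_k is strictly increasing; moreover j_i is precisely the entry of T that moves from row i+1 to row i during promotion. -/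
open Classical

section Aux

variable {lam : List ℕ} {n : ℕ}

lemma inShape_left {i j j' : ℕ} (h : inShape lam (i, j)) (hj : j' ≤ j) :
    inShape lam (i, j') := lt_of_le_of_lt hj h

lemma inShape_up (hs : lam.Pairwise (· ≥ ·)) {i j : ℕ} (h : inShape lam (i + 1, j)) :
    inShape lam (i, j) := by
  unfold inShape at *
  simp only at h ⊢
  by_cases hi : i + 1 < lam.length
  · have h1 : lam.getD (i+1) 0 = lam.get ⟨i+1, hi⟩ := List.getD_eq_get _ _ ⟨i+1, hi⟩
    have hi' : i < lam.length := Nat.lt_of_succ_lt hi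
    have h2 : lam.getD i 0 = lam.get ⟨i, hi'⟩ := List.getD_eq_get _ _ ⟨i, hi'⟩
    have := List.Pairwise.rel_get_of_lt hs (a := ⟨i, hi'⟩) (b := ⟨i+1, hi⟩) (Nat.lt_succ_self i)
    omega
  · rw [List.getD_eq_default _ _ (le_of_not_gt hi)] at h
    omega

lemma inShape_mono (hs : lam.Pairwise (· ≥ ·)) {i i' j : ℕ} (h : inShape lam (i, j))
    (hi : i' ≤ i) : inShape lam (i', j) := by
  induction i with
  | zero => simpa [Nat.le_zero.mp hi]
  | succ m ih =>
    rcases Nat.eq_or_lt_of_le hi with rfl | hlt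
    · exact h
    · exact ih (inShape_up hs h) (Nat.lt_succ_iff.mp hlt)

variable (T : IncTab lam n)

lemma row_mono {i j j' : ℕ} (hj : j ≤ j') (h : inShape lam (i, j')) :
    T.entry (i, j) ≤ T.entry (i, j') := by
  induction j' with
  | zero => simp [Nat.le_zero.mp hj]
  | succ m ih =>
    rcases Nat.eq_or_lt_of_le hj with rfl | hlt
    · exact le_refl _
    · exact le_trans (ih (Nat.lt_succ_iff.mp hlt) (inShape_left h (Nat.le_succ m)))
        (le_of_lt (T.row_strict i m h))

lemma row_mono_strict {i j j' : ℕ} (hj : j < j') (h : inShape lam (i, j')) :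
    T.entry (i, j) < T.entry (i, j') := by
  obtain ⟨m, rfl⟩ : ∃ m, j' = m + 1 := ⟨j' - 1, by omega⟩
  exact lt_of_le_of_lt (row_mono T (Nat.lt_succ_iff.mp hj) (inShape_left h (Nat.le_succ m)))
    (T.row_strict i m h)

lemma entry_inj (hT : IsStandard lam n T) {x y : Cell} (hx : inShape lam x)
    (hy : inShape lam y) (hxy : T.entry x = T.entry y) : x = y := by
  obtain ⟨c, -, hu⟩ := hT.2 (T.entry x) (T.entry_pos x hx) (T.entry_le x hx)
  rw [hu x ⟨hx, rfl⟩, hu y ⟨hy, hxy.symm⟩]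

lemma cnt_eq (hT : IsStandard lam n T) {r c m : ℕ} (hc : inShape lam (r, c))
    (h1 : T.entry (r, c) ≤ m) (h2 : inShape lam (r, c + 1) → m < T.entry (r, c + 1)) :
    cnt lam T.entry (r + 1) m = c + 1 := by
  have hset : (Finset.Icc 1 m).filter (fun v => appearsRow lam T.entry (r + 1) v)
      = (Finset.range (c + 1)).image (fun j => T.entry (r, j)) := by
    ext v
    simp only [Finset.mem_filter, Finset.mem_Icc, Finset.mem_image, Finset.mem_range,
      appearsRow, Nat.add_sub_cancel]
    constructor
    · rintro ⟨⟨hv1, hvm⟩, -, j, hj, hje⟩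
      refine ⟨j, ?_, hje⟩
      by_contra hjc
      have hcs : inShape lam (r, c + 1) := inShape_left hj (by omega)
      have := row_mono T (i := r) (j := c + 1) (j' := j) (by omega) hj
      have := h2 hcs
      omega
    · rintro ⟨j, hj, rfl⟩
      have hjs : inShape lam (r, j) := inShape_left hc (by omega)
      exact ⟨⟨T.entry_pos _ hjs, le_trans (row_mono T (by omega) hc) h1⟩,
        by omega, j, hjs, rfl⟩
  rw [cnt, hset, Finset.card_image_of_injOn, Finset.card_range]
  intro a ha b hb hab
  simp only [Finset.coe_range, Set.mem_Iio] at ha hb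
  have := entry_inj T hT (inShape_left hc (by omega)) (inShape_left hc (by omega)) hab
  exact (Prod.mk.injEq _ _ _ _).mp this |>.2

lemma cnt_le {r c m : ℕ} (h : inShape lam (r, c) → m < T.entry (r, c)) :
    cnt lam T.entry (r + 1) m ≤ c := by
  have hsub : (Finset.Icc 1 m).filter (fun v => appearsRow lam T.entry (r + 1) v)
      ⊆ (Finset.range c).image (fun j => T.entry (r, j)) := by
    intro v hv
    simp only [Finset.mem_filter, Finset.mem_Icc, appearsRow, Nat.add_sub_cancel] at hv
    obtain ⟨⟨hv1, hvm⟩, -, j, hj, hje⟩ := hv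
    simp only [Finset.mem_image, Finset.mem_range]
    refine ⟨j, ?_, hje⟩
    by_contra hjc
    have hcs : inShape lam (r, c) := inShape_left hj (by omega)
    have := row_mono T (i := r) (j := c) (j' := j) (by omega) hj
    have := h hcs
    omega
  calc cnt lam T.entry (r + 1) m ≤ _ := Finset.card_le_card hsub
    _ ≤ c := le_trans Finset.card_image_le (by simp)

lemma entry_00_le (hs : lam.Pairwise (· ≥ ·)) {i j : ℕ} (h : inShape lam (i, j)) :
    T.entry (0, 0) ≤ T.entry (i, j) := by
  induction i with
  | zero => exact row_mono T (Nat.zero_le j) h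
  | succ m ih => exact le_trans (ih (inShape_up hs h)) (le_of_lt (T.col_strict m j h))

lemma entry_corner (hs : lam.Pairwise (· ≥ ·)) (hT : IsStandard lam n T) (hn : 1 ≤ n) :
    inShape lam (0, 0) ∧ T.entry (0, 0) = 1 := by
  obtain ⟨c, ⟨hc, hce⟩, -⟩ := hT.2 1 le_rfl hn
  have hc' : inShape lam (c.1, c.2) := hc
  have h00 : inShape lam (0, 0) :=
    inShape_mono hs (inShape_left hc' (Nat.zero_le _)) (Nat.zero_le _)
  refine ⟨h00, le_antisymm ?_ (T.entry_pos _ h00)⟩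
  calc T.entry (0, 0) ≤ T.entry (c.1, c.2) := entry_00_le T hs hc'
    _ = 1 := hce

lemma cyc_eq {n j : ℕ} (h : j < n) : cyc n 1 j = j + 1 := by
  simp [cyc, Nat.mod_eq_of_lt h]

/-- Balance is created exactly when the bullet moves down. -/
lemma balance_here (hs : lam.Pairwise (· ≥ ·)) (hT : IsStandard lam n T) {r c v : ℕ}
    (hc : inShape lam (r + 1, c)) (h7 : T.entry (r, c) ≤ v)
    (h8 : inShape lam (r, c + 1) → v < T.entry (r, c + 1))
    (he : T.entry (r + 1, c) = v + 1) :
    cnt lam T.entry (r + 1) (v + 1) = c + 1 ∧ cnt lam T.entry (r + 2) (v + 1) = c + 1 := by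
  constructor
  · refine cnt_eq T hT (inShape_up hs hc) (by omega) ?_
    intro hcs
    have h1 := h8 hcs
    have hne : T.entry (r, c + 1) ≠ v + 1 := by
      intro hE
      have := entry_inj T hT hcs hc (hE.trans he.symm)
      simp [Prod.mk.injEq] at this
    omega
  · exact cnt_eq T hT hc (le_of_eq he) (fun hcs => he ▸ T.row_strict (r + 1) c hcs)

end Aux

/-- The invariant carried through the jeu-de-taquin slide of promotion:
after `j` substeps (processed values `1, …, j+1`), there is a unique bullet
at `(r, c)`, unprocessed values are unmoved, the bullet's right and lower
neighbours are unprocessed, the bullet has visited rows `0, …, r ≤ k`, entering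
row `i` at the balance point `J i`, no `(r+1, r+2)`-balance has occurred while
in row `r`, and the recorded moves happened at the balance points. -/
def InvP (lam : List ℕ) (n : ℕ) (f : Cell → ℕ) (k : ℕ) (J : ℕ → ℕ) (j r c : ℕ) : Prop :=
  inShape lam (r, c) ∧
  iterSub lam n 1 f j (r, c) = 0 ∧
  (∀ x : Cell, inShape lam x → x ≠ (r, c) → iterSub lam n 1 f j x ≠ 0) ∧
  (∀ x : Cell, inShape lam x → j + 1 < f x → iterSub lam n 1 f j x = f x) ∧
  (∀ x : Cell, inShape lam x → j + 1 < iterSub lam n 1 f j x → iterSub lam n 1 f j x = f x) ∧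
  (∀ x : Cell, ¬ inShape lam x → iterSub lam n 1 f j x = 0) ∧
  f (r, c) ≤ j + 1 ∧
  (inShape lam (r, c + 1) → j + 1 < f (r, c + 1)) ∧
  (inShape lam (r + 1, c) → j + 1 < f (r + 1, c)) ∧
  r ≤ k ∧
  J r ≤ j + 1 ∧
  (∀ m, J r ≤ m → m ≤ j + 1 → cnt lam f (r + 1) m ≠ cnt lam f (r + 2) m) ∧
  (∀ i, 1 ≤ i → i ≤ r → 2 ≤ J i ∧ moveAt lam (iterSub lam n 1 f (J i - 2)) (J i) i)

lemma master (lam : List ℕ) (hlam : IsPartition lam) (n : ℕ)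
    (T : IncTab lam n) (hT : IsStandard lam n T)
    (k : ℕ) (J : ℕ → ℕ) (hJ0 : J 0 = 1)
    (hJ : ∀ i, 1 ≤ i → i ≤ k →
      J (i - 1) < J i ∧ J i ≤ n ∧
      cnt lam T.entry i (J i) = cnt lam T.entry (i + 1) (J i) ∧
      ∀ m, J (i - 1) < m → m < J i → cnt lam T.entry i m ≠ cnt lam T.entry (i + 1) m)
    (hmax : ¬ ∃ m, J k < m ∧ m ≤ n ∧
      cnt lam T.entry (k + 1) m = cnt lam T.entry (k + 2) m)
    (hn : 1 ≤ n) :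
    ∀ j, j ≤ n - 1 → ∃ r c, InvP lam n T.entry k J j r c := by
  intro j
  induction j with
  | zero =>
    intro _
    obtain ⟨h00, e1⟩ := entry_corner T hlam.1 hT hn
    have hg : ∀ x : Cell, iterSub lam n 1 T.entry 0 x
        = if x = ((0, 0) : Cell) ∧ T.entry x = 1 then 0 else T.entry x := fun x => rfl
    refine ⟨0, 0, h00, ?_, ?_, ?_, ?_, ?_, ?_, ?_, ?_, ?_, ?_, ?_, ?_⟩
    · rw [hg, if_pos ⟨rfl, e1⟩]
    · intro x hx hne
      rw [hg, if_neg (fun h => hne h.1)]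
      have := T.entry_pos x hx; omega
    · intro x hx hfx
      rw [hg, if_neg (by rintro ⟨-, hE⟩; omega)]
    · intro x hx hgx
      rw [hg] at hgx ⊢
      by_cases hc : x = ((0, 0) : Cell) ∧ T.entry x = 1
      · rw [if_pos hc] at hgx; omega
      · rw [if_neg hc]
    · intro x hx
      rw [hg]
      split
      · rfl
      · exact T.zero_outside x hx
    · omega
    · intro h; have := T.row_strict 0 0 h; omega
    · intro h; have := T.col_strict 0 0 h; omega
    · exact Nat.zero_le k
    · omega
    · intro m hm1 hm2
      rw [hJ0] at hm1
      have hm : m = 1 := by omega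
      subst hm
      have c1 : cnt lam T.entry (0 + 1) 1 = 0 + 1 :=
        cnt_eq T hT h00 (by omega) (fun h => by
          have h' : T.entry (0, 0) < T.entry (0, 0 + 1) := T.row_strict 0 0 h
          omega)
      have c2 : cnt lam T.entry (0 + 2) 1 ≤ 0 :=
        cnt_le T (r := 1) (c := 0) (fun h => by
          have h' : T.entry (0, 0) < T.entry (1, 0) := T.col_strict 0 0 h
          omega)
      omega
    · intro i hi1 hi2; omega
  | succ j ih =>
    intro hj1
    obtain ⟨r, c, h1, h2, h3, h4, h5, h6, h7, h8, h9, h10, h11, h12, h13⟩ := ih (by omega)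
    have hcyc : cyc n 1 (j + 1) = j + 2 := cyc_eq (by omega)
    have hstep : iterSub lam n 1 T.entry (j + 1)
        = substep lam (j + 2) (iterSub lam n 1 T.entry j) := by
      show substep lam (cyc n 1 (j + 1)) _ = _
      rw [hcyc]
    set g := iterSub lam n 1 T.entry j with hgdef
    obtain ⟨p, ⟨hp0, hpe0⟩, hpu⟩ := hT.2 (j + 2) (by omega) (by omega)
    obtain ⟨p1, p2⟩ := p
    have hp : inShape lam (p1, p2) := hp0
    have hpe : T.entry (p1, p2) = j + 2 := hpe0
    have hpu' : ∀ y : Cell, inShape lam y → T.entry y = j + 2 → y = (p1, p2) :=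
      fun y a b => hpu y ⟨a, b⟩
    have hbul : ∀ x : Cell, isBullet lam g x ↔ x = (r, c) := by
      intro x
      constructor
      · rintro ⟨hxs, hx0⟩
        by_contra hne
        exact h3 x hxs hne hx0
      · rintro rfl
        exact ⟨h1, h2⟩
    have hgp : g (p1, p2) = j + 2 := by
      rw [h4 (p1, p2) hp (by omega)]; exact hpe
    have hvC : ∀ x : Cell, inC lam g (j + 2) x → x = (p1, p2) := by
      rintro x ⟨hxs, hxe, -⟩
      have h5' := h5 x hxs (by omega)
      exact hpu' x hxs (by rw [← h5']; exact hxe)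
    have hinC : ∀ x : Cell, inC lam g (j + 2) x ↔
        (x = ((p1, p2) : Cell) ∧ ((p1 = r ∧ p2 = c + 1) ∨ (p1 = r + 1 ∧ p2 = c))) := by
      intro x
      constructor
      · intro hx
        have hxp := hvC x hx
        obtain ⟨hxs, hxe, hadj⟩ := hx
        refine ⟨hxp, ?_⟩
        rw [hxp] at hadj
        rcases hadj with ⟨hge, hb⟩ | ⟨hge, hb⟩
        · have h' := (hbul _).mp hb
          rw [Prod.mk.injEq] at h'
          simp only at h' hge
          left; omega
        · have h' := (hbul _).mp hb
          rw [Prod.mk.injEq] at h'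
          simp only at h' hge
          right; omega
      · rintro ⟨rfl, hor⟩
        refine ⟨hp, hgp, ?_⟩
        rcases hor with ⟨hq1, hq2⟩ | ⟨hq1, hq2⟩
        · left
          refine ⟨by simp only; omega, ?_⟩
          have hEq : ((p1, p2 - 1) : Cell) = (r, c) := by
            rw [Prod.mk.injEq]; omega
          rw [hEq]
          exact ⟨h1, h2⟩
        · right
          refine ⟨by simp only; omega, ?_⟩
          have hEq : ((p1 - 1, p2) : Cell) = (r, c) := by
            rw [Prod.mk.injEq]; omega
          rw [hEq]
          exact ⟨h1, h2⟩
    by_cases hA : (p1 = r ∧ p2 = c + 1) ∨ (p1 = r + 1 ∧ p2 = c)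
    · -- the bullet moves
      have hne : ((p1, p2) : Cell) ≠ (r, c) := by
        intro hE
        rw [hE, h2] at hgp
        omega
      have hg'p : iterSub lam n 1 T.entry (j + 1) (p1, p2) = 0 := by
        rw [hstep]
        unfold substep
        rw [if_pos ((hinC _).mpr ⟨rfl, hA⟩)]
      have hg'b : iterSub lam n 1 T.entry (j + 1) (r, c) = j + 2 := by
        rw [hstep]
        unfold substep
        rw [if_neg (fun hC => hne (((hinC _).mp hC).1 ▸ rfl : ((p1,p2) : Cell) = (r,c)))]
        · rw [if_pos]
          refine ⟨⟨h1, h2⟩, ?_⟩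
          rcases hA with ⟨hq1, hq2⟩ | ⟨hq1, hq2⟩
          · left
            refine (hinC _).mpr ⟨?_, Or.inl ⟨hq1, hq2⟩⟩
            rw [Prod.mk.injEq]; exact ⟨hq1.symm, hq2.symm⟩
          · right
            refine (hinC _).mpr ⟨?_, Or.inr ⟨hq1, hq2⟩⟩
            rw [Prod.mk.injEq]; exact ⟨hq1.symm, hq2.symm⟩
      have hgO : ∀ x : Cell, x ≠ (p1, p2) → x ≠ (r, c) →
          iterSub lam n 1 T.entry (j + 1) x = g x := by
        intro x hx1 hx2
        rw [hstep]
        unfold substep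
        rw [if_neg (fun hC => hx1 ((hinC x).mp hC).1)]
        rw [if_neg]
        rintro ⟨hB, -⟩
        exact hx2 ((hbul x).mp hB)
      -- common clauses
      have hc3 : ∀ x : Cell, inShape lam x → x ≠ (p1, p2) →
          iterSub lam n 1 T.entry (j + 1) x ≠ 0 := by
        intro x hx hne'
        by_cases hxc : x = ((r, c) : Cell)
        · rw [hxc, hg'b]; omega
        · rw [hgO x hne' hxc]; exact h3 x hx hxc
      have hc4 : ∀ x : Cell, inShape lam x → j + 2 < T.entry x →
          iterSub lam n 1 T.entry (j + 1) x = T.entry x := by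
        intro x hx hfx
        have hx1 : x ≠ ((p1, p2) : Cell) := by intro hE; rw [hE, hpe] at hfx; omega
        have hx2 : x ≠ ((r, c) : Cell) := by intro hE; rw [hE] at hfx; omega
        rw [hgO x hx1 hx2]
        exact h4 x hx (by omega)
      have hc5 : ∀ x : Cell, inShape lam x → j + 2 < iterSub lam n 1 T.entry (j + 1) x →
          iterSub lam n 1 T.entry (j + 1) x = T.entry x := by
        intro x hx hgx
        by_cases hx1 : x = ((p1, p2) : Cell)
        · rw [hx1, hg'p] at hgx; omega
        · by_cases hx2 : x = ((r, c) : Cell)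
          · rw [hx2, hg'b] at hgx; omega
          · rw [hgO x hx1 hx2] at hgx ⊢
            exact h5 x hx (by omega)
      have hc6 : ∀ x : Cell, ¬ inShape lam x → iterSub lam n 1 T.entry (j + 1) x = 0 := by
        intro x hx
        have hx1 : x ≠ ((p1, p2) : Cell) := by intro hE; rw [hE] at hx; exact hx hp
        have hx2 : x ≠ ((r, c) : Cell) := by intro hE; rw [hE] at hx; exact hx h1
        rw [hgO x hx1 hx2]
        exact h6 x hx
      rcases hA with ⟨hq1, hq2⟩ | ⟨hq1, hq2⟩
      · -- bullet moves right: new bullet (r, c+1)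
        have hq1' := hq1.symm; have hq2' := hq2.symm
        subst hq1'; subst hq2'
        refine ⟨r, c + 1, hp, hg'p, hc3, hc4, hc5, hc6, le_of_eq hpe, ?_, ?_, h10, by omega,
          ?_, h13⟩
        · intro h; have := T.row_strict r (c + 1) h; omega
        · intro h; have := T.col_strict r (c + 1) h; omega
        · intro m hm1 hm2
          by_cases hm : m ≤ j + 1
          · exact h12 m hm1 hm
          · have hm' : m = j + 2 := by omega
            subst hm'
            have c1 : cnt lam T.entry (r + 1) (j + 2) = (c + 1) + 1 :=
              cnt_eq T hT hp (le_of_eq hpe)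
                (fun h => by have := T.row_strict r (c + 1) h; omega)
            have c2 : cnt lam T.entry (r + 2) (j + 2) ≤ c + 1 :=
              cnt_le T (r := r + 1) (c := c + 1)
                (fun h => by have := T.col_strict r (c + 1) h; omega)
            omega
      · -- bullet moves down: new bullet (r+1, c)
        have hq1' := hq1.symm; have hq2' := hq2.symm
        subst hq1'; subst hq2'
        have hbal := balance_here T hlam.1 hT hp h7 h8 hpe
        have hn2 : j + 2 ≤ n := by omega
        have hrk : r < k := by
          rcases Nat.lt_or_ge r k with hlt | hge
          · exact hlt
          · exfalso
            apply hmax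
            have hrk' : r = k := le_antisymm h10 hge
            subst hrk'
            exact ⟨j + 2, by omega, hn2, hbal.1.trans hbal.2.symm⟩
        have hJr := hJ (r + 1) (by omega) (by omega)
        simp only [Nat.add_sub_cancel] at hJr
        obtain ⟨hJlt, hJle, hJbal, hJnob⟩ := hJr
        have hJeq : J (r + 1) = j + 2 := by
          by_contra hne'
          rcases Nat.lt_or_ge (J (r + 1)) (j + 2) with hlt | hge
          · exact h12 (J (r + 1)) (by omega) (by omega) hJbal
          · exact hJnob (j + 2) (by omega) (by omega) (hbal.1.trans hbal.2.symm)
        refine ⟨r + 1, c, hp, hg'p, hc3, hc4, hc5, hc6, le_of_eq hpe, ?_, ?_, by omega,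
          by omega, ?_, ?_⟩
        · intro h; have := T.row_strict (r + 1) c h; omega
        · intro h; have := T.col_strict (r + 1) c h; omega
        · intro m hm1 hm2
          have hm' : m = j + 2 := by omega
          subst hm'
          have hb1 : cnt lam T.entry (r + 1 + 1) (j + 2) = c + 1 := hbal.2
          have c2 : cnt lam T.entry (r + 1 + 2) (j + 2) ≤ c :=
            cnt_le T (r := r + 2) (c := c) (fun h => by
              have h' : T.entry (r + 1, c) < T.entry (r + 2, c) := T.col_strict (r + 1) c h
              omega)
          omega
        · intro i hi1 hi2
          by_cases hir : i ≤ r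
          · exact h13 i hi1 hir
          · have hieq : i = r + 1 := by omega
            subst hieq
            refine ⟨by omega, ?_⟩
            have hJ2 : J (r + 1) - 2 = j := by omega
            rw [hJ2, hJeq]
            refine ⟨(r, c), ⟨h1, h2⟩, rfl, ?_⟩
            show inC lam g (j + 2) (r + 1, c)
            exact (hinC _).mpr ⟨rfl, Or.inr ⟨rfl, rfl⟩⟩
    · -- no move: state unchanged
      have hf8 : inShape lam (r, c + 1) → j + 2 < T.entry (r, c + 1) := by
        intro h
        have hgt := h8 h
        have hne' : T.entry (r, c + 1) ≠ j + 2 := by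
          intro hE
          have h' := hpu' _ h hE
          rw [Prod.mk.injEq] at h'
          exact hA (Or.inl ⟨h'.1.symm, h'.2.symm⟩)
        omega
      have hf9 : inShape lam (r + 1, c) → j + 2 < T.entry (r + 1, c) := by
        intro h
        have hgt := h9 h
        have hne' : T.entry (r + 1, c) ≠ j + 2 := by
          intro hE
          have h' := hpu' _ h hE
          rw [Prod.mk.injEq] at h'
          exact hA (Or.inr ⟨h'.1.symm, h'.2.symm⟩)
        omega
      have hnoC : ∀ x : Cell, ¬ inC lam g (j + 2) x := fun x hx => hA ((hinC x).mp hx).2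
      have hgB : ∀ x : Cell, iterSub lam n 1 T.entry (j + 1) x = g x := by
        intro x
        rw [hstep]
        unfold substep
        rw [if_neg (hnoC x), if_neg]
        rintro ⟨-, hor⟩
        rcases hor with h | h <;> exact hnoC _ h
      refine ⟨r, c, h1, ?_, ?_, ?_, ?_, ?_, by omega, ?_, ?_, h10, by omega, ?_, h13⟩
      · rw [hgB]; exact h2
      · intro x hx hne'; rw [hgB]; exact h3 x hx hne'
      · intro x hx hfx; rw [hgB]; exact h4 x hx (by omega)
      · intro x hx hgx; rw [hgB] at hgx ⊢; exact h5 x hx (by omega)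
      · intro x hx; rw [hgB]; exact h6 x hx
      · exact hf8
      · exact hf9
      · intro m hm1 hm2
        by_cases hm : m ≤ j + 1
        · exact h12 m hm1 hm
        · have hm' : m = j + 2 := by omega
          subst hm'
          have c1 : cnt lam T.entry (r + 1) (j + 2) = c + 1 :=
            cnt_eq T hT h1 (by omega) hf8
          have c2 : cnt lam T.entry (r + 2) (j + 2) ≤ c :=
            cnt_le T (r := r + 1) (c := c) hf9
          omega

/-- for the lattice word of a standard tableau `T`, the successive first
balance points `1 = J 0 < J 1 < … < J k` (with `k` maximal) satisfy `k ≤ ℓ(λ) - 1`, are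
strictly increasing, and `J i` is precisely the entry moving from row `i+1` to row `i`
during promotion (and nothing moves from row `i+1` to row `i` for `i > k`). -/
theorem balance_points_of_promotion
    (lam : List ℕ) (hlam : IsPartition lam) (n : ℕ)
    (T : IncTab lam n) (hT : IsStandard lam n T)
    (k : ℕ) (J : ℕ → ℕ) (hJ0 : J 0 = 1)
    (hJ : ∀ i, 1 ≤ i → i ≤ k →
      J (i - 1) < J i ∧ J i ≤ n ∧
      cnt lam T.entry i (J i) = cnt lam T.entry (i + 1) (J i) ∧
      ∀ m, J (i - 1) < m → m < J i → cnt lam T.entry i m ≠ cnt lam T.entry (i + 1) m)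
    (hmax : ¬ ∃ m, J k < m ∧ m ≤ n ∧
      cnt lam T.entry (k + 1) m = cnt lam T.entry (k + 2) m) :
    k ≤ lam.length - 1 ∧
    (∀ i, 1 ≤ i → i ≤ k → J (i - 1) < J i) ∧
    (∀ i, 1 ≤ i → i ≤ k → promEdge lam n i T 1 (J i)) ∧
    (∀ i, k < i → ∀ β, ¬ promEdge lam n i T 1 β) := by
  by_cases hn : 1 ≤ n
  case neg =>
    have hk0 : k = 0 := by
      by_contra hk
      obtain ⟨hlt, hle, -⟩ := hJ 1 (by omega) (by omega)
      omega
    refine ⟨by omega, fun i hi1 hi2 => (hJ i hi1 hi2).1, fun i hi1 hi2 => by omega, ?_⟩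
    rintro i hi β ⟨-, hq, -⟩
    omega
  case pos =>
    have hM := master lam hlam n T hT k J hJ0 hJ hmax hn
    obtain ⟨r, c, h1, h2, h3, h4, h5, h6, h7, h8, h9, h10, h11, h12, h13⟩ := hM (n - 1) le_rfl
    have hrk : r = k := by
      rcases Nat.lt_or_ge r k with hlt | hge
      · exfalso
        obtain ⟨hJlt, hJle, hJbal, -⟩ := hJ (r + 1) (by omega) (by omega)
        simp only [Nat.add_sub_cancel] at hJlt
        exact h12 (J (r + 1)) (by omega) (by omega) hJbal
      · exact le_antisymm h10 hge
    subst hrk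
    refine ⟨?_, fun i hi1 hi2 => (hJ i hi1 hi2).1, ?_, ?_⟩
    · -- k ≤ length - 1
      have hlen : r < lam.length := by
        by_contra hc'
        have hd : lam.getD r 0 = 0 := List.getD_eq_default _ _ (by omega)
        have h1' : c < lam.getD r 0 := h1
        omega
      omega
    · -- the promotion edges at the balance points
      intro i hi1 hi2
      obtain ⟨hJ2, hmov⟩ := h13 i hi1 hi2
      obtain ⟨-, hJle, -, -⟩ := hJ i hi1 hi2
      refine ⟨le_rfl, hn, J i - 2, by omega, ?_, ?_⟩
      · have hc' : J i - 2 + 1 = J i - 1 := by omega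
        rw [hc', cyc_eq (by omega)]
        omega
      · show moveAt lam (iterSub lam n 1 (gromIter lam n T.entry (1 - 1)) (J i - 2)) (J i) i
        have hg0 : gromIter lam n T.entry (1 - 1) = T.entry := rfl
        rw [hg0]
        exact hmov
    · -- no moves below row k
      rintro i hik β ⟨-, -, j, hj1, hcycβ, hmov⟩
      have hg0 : gromIter lam n T.entry (1 - 1) = T.entry := rfl
      rw [hg0] at hmov
      obtain ⟨r', c', g1, g2, g3, g4, g5, g6, g7, g8, g9, g10, g11, g12, g13⟩ :=
        hM j (by omega)
      obtain ⟨cc, hccB, hcc1, hccC⟩ := hmov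
      have hβ : β = j + 2 := by
        rw [cyc_eq (by omega)] at hcycβ
        omega
      have hcceq : cc = ((r', c') : Cell) := by
        obtain ⟨hcs, hc0⟩ := hccB
        by_contra hne
        exact g3 cc hcs hne hc0
      rw [hcceq] at hcc1 hccC
      simp only at hcc1
      have hr' : r' = r := by omega
      subst hr'
      obtain ⟨hs, he0, -⟩ := hccC
      have he : iterSub lam n 1 T.entry j (r' + 1, c') = β := he0
      have hs' : inShape lam (r' + 1, c') := hs
      have hfe : T.entry (r' + 1, c') = j + 2 := by
        have h5' := g5 (r' + 1, c') hs' (by omega)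
        rw [← h5']
        rw [he, hβ]
      have hbal := balance_here T hlam.1 hT hs' g7 g8 hfe
      apply hmax
      refine ⟨j + 2, by omega, by omega, ?_⟩
      have hb1 : cnt lam T.entry (r' + 1) (j + 2) = c' + 1 := hbal.1
      have hb2 : cnt lam T.entry (r' + 2) (j + 2) = c' + 1 := hbal.2
      omega
end

section
/- For an increasing tableau T with entries in {1,…,q} and any i ≥ 1, the promotion digraph prom_i(T) has no loops. -/
open Classical

/-- the promotion digraph of an increasing tableau has no loops. -/
theorem increasing_promotion_digraph_no_loops
    (lam : List ℕ) (hlam : IsPartition lam) (q : ℕ)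
    (T : IncTab lam q) (i : ℕ) (hi : 1 ≤ i) (j : ℕ) :
    ¬ promEdge lam q i T j j := by
  rintro ⟨h1, h2, k, hk, hcyc, -⟩
  unfold cyc at hcyc
  have hmod : (j - 1 + (k + 1)) % q = j - 1 := by omega
  have hq : 0 < q := by omega
  have hj1 : (j - 1) % q = j - 1 := Nat.mod_eq_of_lt (by omega)
  have hcong : (j - 1) ≡ (j - 1 + (k + 1)) [MOD q] := by
    unfold Nat.ModEq; omega
  have hdvd : q ∣ (j - 1 + (k + 1)) - (j - 1) :=
    (Nat.modEq_iff_dvd' (by omega)).mp hcong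
  have : q ∣ k + 1 := by
    have : (j - 1 + (k + 1)) - (j - 1) = k + 1 := by omega
    rwa [this] at hdvd
  have := Nat.le_of_dvd (by omega) this
  omega
end

section
/- Let T be an increasing tableau of shape λ with r rows and entries in {1,…,q}. Then a value ℓ appears in the union of the bottom i rows of T if and only if ℓ is an excedance of the promotion digraph prom_{r−i}(T). In particular, the entries of the bottom row of T are exactly the excedances of prom_{r−1}(T). -/
open Classical

namespace BRE

/-- ordered adjacency: `d` is immediately right of or below `c`. -/
def adjR (c d : Cell) : Prop := d = (c.1, c.2 + 1) ∨ d = (c.1 + 1, c.2)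

/-- rank of value `v` in the cyclic order starting at `α`. -/
def rkv (q α v : ℕ) : ℕ := (v + q - α) % q

lemma rkv_closed {q α v : ℕ} (hα1 : 1 ≤ α) (hαq : α ≤ q) (hv1 : 1 ≤ v) (hvq : v ≤ q) :
    rkv q α v = if α ≤ v then v - α else v + q - α := by
  unfold rkv
  by_cases h : α ≤ v
  · rw [if_pos h]
    have h2 : v + q - α = (v - α) + q := by omega
    rw [h2, Nat.add_mod_right]
    exact Nat.mod_eq_of_lt (by omega)
  · rw [if_neg h]
    exact Nat.mod_eq_of_lt (by omega)

lemma rkv_lt {q α v : ℕ} (hq : 1 ≤ q) : rkv q α v < q := Nat.mod_lt _ (by omega)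

lemma cyc_mem {q α j : ℕ} (hq : 1 ≤ q) : 1 ≤ cyc q α j ∧ cyc q α j ≤ q := by
  unfold cyc
  have := Nat.mod_lt (α - 1 + j) (show 0 < q by omega)
  omega

lemma rkv_cyc {q α s : ℕ} (hα1 : 1 ≤ α) (hαq : α ≤ q) (hs : s + 1 ≤ q - 1) :
    rkv q α (cyc q α (s+1)) = s + 1 := by
  have hq : 1 ≤ q := by omega
  have hmem := cyc_mem (q := q) (α := α) (j := s+1) hq
  have hcyc : cyc q α (s+1) = if α + s < q then α + s + 1 else α + s + 1 - q := by
    unfold cyc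
    have h1 : α - 1 + (s + 1) = α + s := by omega
    rw [h1]
    by_cases h : α + s < q
    · rw [if_pos h, Nat.mod_eq_of_lt h]
    · rw [if_neg h]
      have h2 : α + s = (α + s - q) + q := by omega
      rw [h2, Nat.add_mod_right, Nat.mod_eq_of_lt (by omega)]; omega
  rw [rkv_closed hα1 hαq hmem.1 hmem.2]
  rw [hcyc] at hmem ⊢
  by_cases h : α + s < q
  · rw [if_pos h] at hmem ⊢
    rw [if_pos (by omega)]
    omega
  · rw [if_neg h] at hmem ⊢
    rw [if_neg (by omega)]
    omega

lemma rkv_inj {q α x y : ℕ} (hα1 : 1 ≤ α) (hαq : α ≤ q) (hx1 : 1 ≤ x) (hxq : x ≤ q)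
    (hy1 : 1 ≤ y) (hyq : y ≤ q) (h : rkv q α x = rkv q α y) : x = y := by
  rw [rkv_closed hα1 hαq hx1 hxq, rkv_closed hα1 hαq hy1 hyq] at h
  by_cases h1 : α ≤ x <;> by_cases h2 : α ≤ y <;>
    simp only [if_pos, if_neg, h1, h2, if_true, if_false] at h <;> omega

lemma rkv_self {q α : ℕ} (hα1 : 1 ≤ α) (hαq : α ≤ q) : rkv q α α = 0 := by
  rw [rkv_closed hα1 hαq hα1 hαq, if_pos le_rfl, Nat.sub_self]

/-- weight of an entry at sub-stage `s`: bullets weigh `2s+1`, values `2·rank`. -/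
def Wt (q α s x : ℕ) : ℕ := if x = 0 then 2*s+1 else 2 * rkv q α x

/-- slide invariant after `s` substeps of stage `α`. -/
def Inv (lam : List ℕ) (q α s : ℕ) (g : Cell → ℕ) : Prop :=
  (∀ c, ¬ inShape lam c → g c = 0) ∧
  (∀ c, inShape lam c → g c ≤ q) ∧
  (∀ c, g c ≠ α) ∧
  (∀ c d, inShape lam c → inShape lam d → adjR c d → Wt q α s (g c) < Wt q α s (g d))

/-- start-of-stage invariant: an increasing tableau w.r.t. the cyclic order at `α`. -/
def Stage (lam : List ℕ) (q α : ℕ) (f : Cell → ℕ) : Prop :=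
  (∀ c, ¬ inShape lam c → f c = 0) ∧
  (∀ c, inShape lam c → 1 ≤ f c ∧ f c ≤ q) ∧
  (∀ c d, inShape lam c → inShape lam d → adjR c d → rkv q α (f c) < rkv q α (f d))

lemma inShape_left {lam : List ℕ} {a b : ℕ} (h : inShape lam (a, b + 1)) :
    inShape lam (a, b) := by
  unfold inShape at h ⊢; simp only at h ⊢; omega

lemma inShape_up {lam : List ℕ} (hlam : IsPartition lam) {a b : ℕ}
    (h : inShape lam (a + 1, b)) : inShape lam (a, b) := by
  unfold inShape at h ⊢
  simp only at h ⊢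
  have h2 : a + 1 < lam.length := by
    by_contra hc
    rw [List.getD_eq_default _ _ (by omega)] at h
    omega
  have h1 : a < lam.length := by omega
  rw [List.getD_eq_getElem _ _ h2] at h
  rw [List.getD_eq_getElem _ _ h1]
  have := List.pairwise_iff_getElem.mp hlam.1 a (a+1) h1 h2 (by omega)
  omega

lemma inShape_row_lt {lam : List ℕ} {c : Cell} (h : inShape lam c) : c.1 < lam.length := by
  unfold inShape at h
  by_contra hc
  rw [List.getD_eq_default _ _ (by omega)] at h
  omega

/-- for a stage-invariant filling, the stage value `α` occurs only at the corner. -/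
lemma stage_corner {lam : List ℕ} (hlam : IsPartition lam) {q α : ℕ} {f : Cell → ℕ}
    (hα1 : 1 ≤ α) (hαq : α ≤ q) (hS : Stage lam q α f) :
    ∀ c : Cell, inShape lam c → c ≠ ((0,0) : Cell) → f c ≠ α := by
  rintro ⟨a, b⟩ hc hne hfa
  rcases Nat.eq_zero_or_pos b with hb | hb
  · subst hb
    have ha : 1 ≤ a := by
      rcases Nat.eq_zero_or_pos a with h | h
      · exact absurd (by simp [h]) hne
      · exact h
    have hc' : inShape lam (a - 1, 0) := by
      have : inShape lam ((a-1) + 1, 0) := by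
        have : (a - 1) + 1 = a := by omega
        rw [this]; exact hc
      exact inShape_up hlam this
    have hadj : adjR ((a-1, 0) : Cell) ((a, 0) : Cell) := by
      right
      show ((a, 0) : Cell) = (a - 1 + 1, 0)
      have h9 : a - 1 + 1 = a := by omega
      rw [h9]
    have := hS.2.2 _ _ hc' hc hadj
    rw [hfa, rkv_self hα1 hαq] at this
    omega
  · have hc' : inShape lam (a, b - 1) := by
      have : inShape lam (a, (b-1) + 1) := by
        have : (b - 1) + 1 = b := by omega
        rw [this]; exact hc
      exact inShape_left this
    have hadj : adjR ((a, b-1) : Cell) ((a, b) : Cell) := by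
      left
      show ((a, b) : Cell) = (a, b - 1 + 1)
      have h9 : b - 1 + 1 = b := by omega
      rw [h9]
    have := hS.2.2 _ _ hc' hc hadj
    rw [hfa, rkv_self hα1 hαq] at this
    omega

lemma substep_eq (lam : List ℕ) (v : ℕ) (g : Cell → ℕ) (c : Cell) :
    substep lam v g c = if inC lam g v c then 0
      else if isBullet lam g c ∧ (inC lam g v (c.1, c.2 + 1) ∨ inC lam g v (c.1 + 1, c.2))
        then v else g c := rfl

lemma iterSub_zero (lam : List ℕ) (q α : ℕ) (f : Cell → ℕ) (c : Cell) :
    iterSub lam q α f 0 c = if c = ((0,0) : Cell) ∧ f c = α then 0 else f c := rfl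

lemma iterSub_succ (lam : List ℕ) (q α : ℕ) (f : Cell → ℕ) (j : ℕ) :
    iterSub lam q α f (j+1) = substep lam (cyc q α (j+1)) (iterSub lam q α f j) := rfl

lemma gromote_eq (lam : List ℕ) (q α : ℕ) (f : Cell → ℕ) (c : Cell) :
    gromote lam q α f c = if inShape lam c ∧ iterSub lam q α f (q-1) c = 0 then α
      else iterSub lam q α f (q-1) c := rfl

lemma Wt_zero (q α s : ℕ) : Wt q α s 0 = 2*s+1 := by simp [Wt]

lemma Wt_pos (q α s : ℕ) {x : ℕ} (hx : x ≠ 0) : Wt q α s x = 2 * rkv q α x := by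
  simp [Wt, hx]

/-- core case analysis for one substep on one adjacent pair. -/
lemma inv_step_pair {lam : List ℕ} {q α s : ℕ} {g : Cell → ℕ} {v : ℕ}
    (hα1 : 1 ≤ α) (hαq : α ≤ q)
    (hv1 : 1 ≤ v) (hvq : v ≤ q) (hrv : rkv q α v = s + 1)
    {c d : Cell} (hc : inShape lam c) (hd : inShape lam d)
    (hold : Wt q α s (g c) < Wt q α s (g d)) (hqd : g d ≤ q)
    (hdinC : isBullet lam g c → g d = v → inC lam g v d)
    (htrig : inC lam g v d → (inC lam g v (c.1, c.2 + 1) ∨ inC lam g v (c.1 + 1, c.2))) :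
    Wt q α (s+1) (substep lam v g c) < Wt q α (s+1) (substep lam v g d) := by
  rw [substep_eq lam v g c, substep_eq lam v g d]
  by_cases h1 : inC lam g v c
  · rw [if_pos h1, Wt_zero]
    have hgc : g c = v := h1.2.1
    rw [hgc, Wt_pos _ _ _ (by omega), hrv] at hold
    by_cases h2 : inC lam g v d
    · exfalso
      rw [h2.2.1, Wt_pos _ _ _ (by omega), hrv] at hold
      omega
    · by_cases h3 : g d = 0
      · exfalso; rw [h3, Wt_zero] at hold; omega
      · have hnd : ¬ (isBullet lam g d ∧ (inC lam g v (d.1, d.2 + 1) ∨ inC lam g v (d.1 + 1, d.2))) :=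
          fun h => h3 h.1.2
        rw [if_neg h2, if_neg hnd, Wt_pos _ _ _ h3]
        rw [Wt_pos _ _ _ h3] at hold
        omega
  · by_cases hb : g c = 0
    · have hbul : isBullet lam g c := ⟨hc, hb⟩
      rw [hb, Wt_zero] at hold
      by_cases h2 : inC lam g v d
      · rw [if_neg h1, if_pos ⟨hbul, htrig h2⟩, if_pos h2, Wt_zero,
          Wt_pos _ _ _ (by omega : v ≠ 0), hrv]
        omega
      · by_cases h3 : g d = 0
        · exfalso; rw [h3, Wt_zero] at hold; omega
        · have hrkd : s + 1 < rkv q α (g d) := by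
            rw [Wt_pos _ _ _ h3] at hold
            rcases Nat.lt_or_ge (s+1) (rkv q α (g d)) with h | h
            · exact h
            · exfalso
              have he : rkv q α (g d) = s + 1 := by omega
              have : g d = v :=
                rkv_inj hα1 hαq (by omega) hqd hv1 hvq (by rw [he, hrv])
              exact h2 (hdinC hbul this)
          have hnd : ¬ (isBullet lam g d ∧ (inC lam g v (d.1, d.2 + 1) ∨ inC lam g v (d.1 + 1, d.2))) :=
            fun h => h3 h.1.2
          rw [if_neg h2, if_neg hnd, Wt_pos _ _ _ h3, if_neg h1]
          by_cases h4 : isBullet lam g c ∧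
              (inC lam g v (c.1, c.2 + 1) ∨ inC lam g v (c.1 + 1, c.2))
          · rw [if_pos h4, Wt_pos _ _ _ (by omega : v ≠ 0), hrv]; omega
          · rw [if_neg h4, hb, Wt_zero]; omega
    · have hNc : ¬ (isBullet lam g c ∧
          (inC lam g v (c.1, c.2 + 1) ∨ inC lam g v (c.1 + 1, c.2))) :=
        fun h => hb h.1.2
      rw [if_neg h1, if_neg hNc, Wt_pos _ _ _ hb]
      rw [Wt_pos _ _ _ hb] at hold
      by_cases h2 : inC lam g v d
      · rw [if_pos h2, Wt_zero]
        rw [h2.2.1, Wt_pos _ _ _ (by omega : v ≠ 0), hrv] at hold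
        omega
      · by_cases h3 : g d = 0
        · rw [h3, Wt_zero] at hold
          rw [if_neg h2]
          by_cases h4 : isBullet lam g d ∧
              (inC lam g v (d.1, d.2 + 1) ∨ inC lam g v (d.1 + 1, d.2))
          · rw [if_pos h4, Wt_pos _ _ _ (by omega : v ≠ 0), hrv]; omega
          · rw [if_neg h4, h3, Wt_zero]; omega
        · have hnd : ¬ (isBullet lam g d ∧ (inC lam g v (d.1, d.2 + 1) ∨ inC lam g v (d.1 + 1, d.2))) :=
            fun h => h3 h.1.2
          rw [if_neg h2, if_neg hnd, Wt_pos _ _ _ h3]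
          rw [Wt_pos _ _ _ h3] at hold
          exact hold

lemma inv_step {lam : List ℕ} {q α s : ℕ} {g : Cell → ℕ}
    (hα1 : 1 ≤ α) (hαq : α ≤ q) (hs : s + 1 ≤ q - 1) (hI : Inv lam q α s g) :
    Inv lam q α (s+1) (substep lam (cyc q α (s+1)) g) := by
  obtain ⟨hI0, hIq, hIα, hIlt⟩ := hI
  have hq : 1 ≤ q := by omega
  set v := cyc q α (s+1) with hv
  have hv1 : 1 ≤ v := (cyc_mem hq).1
  have hvq : v ≤ q := (cyc_mem hq).2
  have hrv : rkv q α v = s + 1 := rkv_cyc hα1 hαq hs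
  refine ⟨?_, ?_, ?_, ?_⟩
  · intro c hc
    have hn1 : ¬ inC lam g v c := fun h => hc h.1
    have hn2 : ¬ (isBullet lam g c ∧ (inC lam g v (c.1, c.2 + 1) ∨ inC lam g v (c.1 + 1, c.2))) :=
      fun h => hc h.1.1
    rw [substep_eq, if_neg hn1, if_neg hn2]
    exact hI0 c hc
  · intro c hc
    rw [substep_eq]
    split_ifs with h1 h2
    · omega
    · exact hvq
    · exact hIq c hc
  · intro c
    rw [substep_eq]
    split_ifs with h1 h2
    · omega
    · intro h
      rw [h, rkv_self hα1 hαq] at hrv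
      omega
    · exact hIα c
  · rintro ⟨a, b⟩ d hc hd hadj
    have hold := hIlt (a, b) d hc hd hadj
    rcases hadj with h | h
    · subst h
      refine inv_step_pair hα1 hαq hv1 hvq hrv hc hd hold (hIq _ hd) ?_ ?_
      · intro hbul hgd
        exact ⟨hd, hgd, Or.inl ⟨by omega, hbul⟩⟩
      · intro h2
        exact Or.inl h2
    · subst h
      refine inv_step_pair hα1 hαq hv1 hvq hrv hc hd hold (hIq _ hd) ?_ ?_
      · intro hbul hgd
        exact ⟨hd, hgd, Or.inr ⟨by omega, hbul⟩⟩
      · intro h2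
        exact Or.inr h2

lemma stage_to_inv0 {lam : List ℕ} (hlam : IsPartition lam) {q α : ℕ} {f : Cell → ℕ}
    (hα1 : 1 ≤ α) (hαq : α ≤ q) (hS : Stage lam q α f) :
    Inv lam q α 0 (iterSub lam q α f 0) := by
  obtain ⟨hS0, hSq, hSlt⟩ := hS
  refine ⟨?_, ?_, ?_, ?_⟩
  · intro c hc
    rw [iterSub_zero]
    split_ifs with h
    · rfl
    · exact hS0 c hc
  · intro c hc
    rw [iterSub_zero]
    split_ifs with h
    · omega
    · exact (hSq c hc).2
  · intro c
    rw [iterSub_zero]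
    split_ifs with h
    · omega
    · intro hfc
      by_cases hc0 : c = ((0,0) : Cell)
      · exact h ⟨hc0, hfc⟩
      · have hcs : inShape lam c := by
          by_contra hns
          rw [hS0 c hns] at hfc
          omega
        exact stage_corner hlam hα1 hαq ⟨hS0, hSq, hSlt⟩ c hcs hc0 hfc
  · intro c d hc hd hadj
    rw [iterSub_zero, iterSub_zero]
    have hdne : ¬ (d = ((0,0) : Cell) ∧ f d = α) := by
      rintro ⟨h0, -⟩
      rcases hadj with h | h
      · rw [h0] at h
        have := congrArg Prod.snd h
        simp at this
      · rw [h0] at h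
        have := congrArg Prod.fst h
        simp at this
    rw [if_neg hdne]
    have hlt := hSlt c d hc hd hadj
    have hd1 := (hSq d hd).1
    split_ifs with hcc
    · rw [hcc.2, rkv_self hα1 hαq] at hlt
      rw [Wt_zero, Wt_pos _ _ _ (by omega : f d ≠ 0)]
      omega
    · have hc1 := (hSq c hc).1
      rw [Wt_pos _ _ _ (by omega : f c ≠ 0), Wt_pos _ _ _ (by omega : f d ≠ 0)]
      omega

lemma inv_iter {lam : List ℕ} (hlam : IsPartition lam) {q α : ℕ} {f : Cell → ℕ}
    (hα1 : 1 ≤ α) (hαq : α ≤ q) (hS : Stage lam q α f) :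
    ∀ j, j ≤ q - 1 → Inv lam q α j (iterSub lam q α f j) := by
  intro j
  induction j with
  | zero => intro _; exact stage_to_inv0 hlam hα1 hαq hS
  | succ n ih =>
    intro h
    rw [iterSub_succ]
    exact inv_step hα1 hαq h (ih (by omega))

lemma stage_succ {lam : List ℕ} (hlam : IsPartition lam) {q α : ℕ} {f : Cell → ℕ}
    (hα1 : 1 ≤ α) (hαq : α + 1 ≤ q) (hS : Stage lam q α f) :
    Stage lam q (α+1) (gromote lam q α f) := by
  obtain ⟨hI0, hIq, hIα, hIlt⟩ :=
    inv_iter hlam hα1 (by omega) hS (q-1) le_rfl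
  have hq : 1 ≤ q := by omega
  have rk_shift : ∀ x, 1 ≤ x → x ≤ q → x ≠ α →
      rkv q (α+1) x = rkv q α x - 1 ∧ 1 ≤ rkv q α x := by
    intro x h1 h2 h3
    rw [rkv_closed (by omega) hαq h1 h2, rkv_closed hα1 (by omega) h1 h2]
    split_ifs <;> omega
  have rk_top : rkv q (α+1) α = q - 1 := by
    rw [rkv_closed (by omega) hαq hα1 (by omega), if_neg (by omega)]
    omega
  refine ⟨?_, ?_, ?_⟩
  · intro c hc
    rw [gromote_eq, if_neg (fun h => hc h.1)]
    exact hI0 c hc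
  · intro c hc
    rw [gromote_eq]
    split_ifs with h1
    · omega
    · have h2 : iterSub lam q α f (q-1) c ≠ 0 := fun h0 => h1 ⟨hc, h0⟩
      have := hIq c hc
      omega
  · intro c d hc hd hadj
    have hold := hIlt c d hc hd hadj
    rw [gromote_eq, gromote_eq]
    split_ifs with h1 h2 h2
    · exfalso
      rw [h1.2, h2.2, Wt_zero] at hold
      omega
    · exfalso
      have hgd : iterSub lam q α f (q-1) d ≠ 0 := fun h0 => h2 ⟨hd, h0⟩
      rw [h1.2, Wt_zero, Wt_pos _ _ _ hgd] at hold
      have := rkv_lt (q := q) (α := α) (v := iterSub lam q α f (q-1) d) hq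
      omega
    · have hgc : iterSub lam q α f (q-1) c ≠ 0 := fun h0 => h1 ⟨hc, h0⟩
      have h3 := rk_shift _ (by omega) (hIq c hc) (hIα c)
      have h4 := rkv_lt (q := q) (α := α) (v := iterSub lam q α f (q-1) c) hq
      rw [rk_top]
      omega
    · have hgc : iterSub lam q α f (q-1) c ≠ 0 := fun h0 => h1 ⟨hc, h0⟩
      have hgd : iterSub lam q α f (q-1) d ≠ 0 := fun h0 => h2 ⟨hd, h0⟩
      have h3 := rk_shift _ (by omega) (hIq c hc) (hIα c)
      have h4 := rk_shift _ (by omega) (hIq d hd) (hIα d)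
      rw [Wt_pos _ _ _ hgc, Wt_pos _ _ _ hgd] at hold
      omega

lemma stage_one {lam : List ℕ} {q : ℕ} (T : IncTab lam q) (hq : 1 ≤ q) :
    Stage lam q 1 T.entry := by
  refine ⟨T.zero_outside, fun c hc => ⟨T.entry_pos c hc, T.entry_le c hc⟩, ?_⟩
  rintro ⟨a, b⟩ d hc hd hadj
  have h1 := T.entry_pos _ hc
  have h2 := T.entry_le _ hc
  have h3 := T.entry_pos _ hd
  have h4 := T.entry_le _ hd
  rw [rkv_closed le_rfl hq h1 h2, rkv_closed le_rfl hq h3 h4, if_pos h1, if_pos h3]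
  have hlt : T.entry (a, b) < T.entry d := by
    rcases hadj with h | h
    · subst h; exact T.row_strict a b hd
    · subst h; exact T.col_strict a b hd
  omega

lemma stage_iter {lam : List ℕ} (hlam : IsPartition lam) {q : ℕ} (T : IncTab lam q) :
    ∀ m, m + 1 ≤ q → Stage lam q (m+1) (gromIter lam q T.entry m) := by
  intro m
  induction m with
  | zero => intro h; exact stage_one T h
  | succ n ih =>
    intro h
    have hS := stage_succ hlam (by omega) h (ih (by omega))
    show Stage lam q (n+1+1) (gromote lam q (n % q + 1) (gromIter lam q T.entry n))
    rw [Nat.mod_eq_of_lt (show n < q by omega)]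
    exact hS

/-- value `l` has a copy in row `k` or below (0-indexed). -/
def Deep (k l : ℕ) (g : Cell → ℕ) : Prop := ∃ c : Cell, g c = l ∧ k ≤ c.1

lemma deep_base {lam : List ℕ} {q α k l : ℕ} {f : Cell → ℕ} (hk : 1 ≤ k)
    (h : Deep k l f) : Deep k l (iterSub lam q α f 0) := by
  obtain ⟨c, h1, h2⟩ := h
  refine ⟨c, ?_, h2⟩
  rw [iterSub_zero, if_neg ?_]
  · exact h1
  · rintro ⟨h3, -⟩
    rw [h3] at h2
    exact absurd h2 (by omega)

lemma deep_substep {lam : List ℕ} {k l w : ℕ} {g : Cell → ℕ} (hl : 1 ≤ l) (hk : 1 ≤ k)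
    (hmove : w = l → ¬ moveAt lam g l k) (h : Deep k l g) : Deep k l (substep lam w g) := by
  obtain ⟨⟨x, y⟩, hc, hkc⟩ := h
  simp only at hkc
  by_cases h1 : inC lam g w (x, y)
  · have hwl : w = l := by rw [← hc]; exact h1.2.1.symm
    subst hwl
    rcases h1.2.2 with ⟨hb2, hbul⟩ | ⟨hb2, hbul⟩
    · -- bullet to the left, at (x, y-1); it receives the value, same row
      have hb2' : 1 ≤ y := hb2
      have hbul' : isBullet lam g (x, y - 1) := hbul
      have hnc : ¬ inC lam g w (x, y - 1) := by
        intro hC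
        have := hC.2.1
        rw [hbul'.2] at this
        omega
      have hxx : ((x : ℕ), y - 1 + 1) = ((x, y) : Cell) := by
        have h2 : y - 1 + 1 = y := by omega
        rw [h2]
      have htr : isBullet lam g (x, y - 1) ∧
          (inC lam g w (((x, y - 1) : Cell).1, ((x, y - 1) : Cell).2 + 1) ∨
            inC lam g w (((x, y - 1) : Cell).1 + 1, ((x, y - 1) : Cell).2)) := by
        refine ⟨hbul', Or.inl ?_⟩
        show inC lam g w (x, y - 1 + 1)
        rw [hxx]
        exact h1
      refine ⟨(x, y - 1), ?_, hkc⟩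
      rw [substep_eq, if_neg hnc, if_pos htr]
    · -- bullet above, at (x-1, y)
      have hb2' : 1 ≤ x := hb2
      have hbul' : isBullet lam g (x - 1, y) := hbul
      have hxx : ((x : ℕ) - 1 + 1, (y : ℕ)) = ((x, y) : Cell) := by
        have h2 : x - 1 + 1 = x := by omega
        rw [h2]
      by_cases h2 : k ≤ x - 1
      · have hnc : ¬ inC lam g w (x - 1, y) := by
          intro hC
          have := hC.2.1
          rw [hbul'.2] at this
          omega
        have htr : isBullet lam g (x - 1, y) ∧
            (inC lam g w (((x - 1, y) : Cell).1, ((x - 1, y) : Cell).2 + 1) ∨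
              inC lam g w (((x - 1, y) : Cell).1 + 1, ((x - 1, y) : Cell).2)) := by
          refine ⟨hbul', Or.inr ?_⟩
          show inC lam g w (x - 1 + 1, y)
          rw [hxx]
          exact h1
        refine ⟨(x - 1, y), ?_, h2⟩
        rw [substep_eq, if_neg hnc, if_pos htr]
      · exfalso
        apply hmove rfl
        refine ⟨(x - 1, y), hbul', by simp only; omega, ?_⟩
        show inC lam g w (x - 1 + 1, y)
        rw [hxx]
        exact h1
  · refine ⟨(x, y), ?_, hkc⟩
    have hnb : ¬ (isBullet lam g ((x, y) : Cell) ∧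
        (inC lam g w (((x, y) : Cell).1, ((x, y) : Cell).2 + 1) ∨
          inC lam g w (((x, y) : Cell).1 + 1, ((x, y) : Cell).2))) := by
      rintro ⟨hbul, -⟩
      rw [hbul.2] at hc
      omega
    rw [substep_eq, if_neg h1, if_neg hnb]
    exact hc

lemma deep_refill {lam : List ℕ} {q α k l : ℕ} {f : Cell → ℕ} (hl : 1 ≤ l)
    (h : Deep k l (iterSub lam q α f (q-1))) : Deep k l (gromote lam q α f) := by
  obtain ⟨c, hc, hkc⟩ := h
  refine ⟨c, ?_, hkc⟩
  rw [gromote_eq, if_neg ?_]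
  · exact hc
  · rintro ⟨-, h0⟩
    rw [h0] at hc
    omega

lemma back_substep {lam : List ℕ} {w l : ℕ} {g : Cell → ℕ} {c : Cell} (hl : 1 ≤ l)
    (h : substep lam w g c = l) : ∃ c' : Cell, g c' = l ∧ c.1 ≤ c'.1 := by
  rw [substep_eq] at h
  split_ifs at h with h1 h2
  · omega
  · rcases h2.2 with h3 | h3
    · exact ⟨(c.1, c.2 + 1), by rw [h3.2.1, h], le_rfl⟩
    · exact ⟨(c.1 + 1, c.2), by rw [h3.2.1, h], by omega⟩
  · exact ⟨c, h, le_rfl⟩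

lemma back_iter {lam : List ℕ} {q α l : ℕ} {f : Cell → ℕ} (hl : 1 ≤ l) :
    ∀ j (c : Cell), iterSub lam q α f j c = l → ∃ c', f c' = l ∧ c.1 ≤ c'.1 := by
  intro j
  induction j with
  | zero =>
    intro c h
    rw [iterSub_zero] at h
    split_ifs at h with h1
    · omega
    · exact ⟨c, h, le_rfl⟩
  | succ n ih =>
    intro c h
    rw [iterSub_succ] at h
    obtain ⟨c', h1, h2⟩ := back_substep hl h
    obtain ⟨c'', h3, h4⟩ := ih c' h1
    exact ⟨c'', h3, le_trans h2 h4⟩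

lemma back_grom {lam : List ℕ} {q l : ℕ} {f : Cell → ℕ} (hl : 1 ≤ l) :
    ∀ m, m < l → ∀ c : Cell, gromIter lam q f m c = l → ∃ c', f c' = l ∧ c.1 ≤ c'.1 := by
  intro m
  induction m with
  | zero => intro _ c h; exact ⟨c, h, le_rfl⟩
  | succ n ih =>
    intro hm c h
    have h' : gromote lam q (n % q + 1) (gromIter lam q f n) c = l := h
    rw [gromote_eq] at h'
    have hne : n % q + 1 ≠ l := by
      have := Nat.mod_le n q
      omega
    split_ifs at h' with h1
    · exact absurd h' hne
    · obtain ⟨c', h2, h3⟩ := back_iter hl (q-1) c h'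
      obtain ⟨c'', h4, h5⟩ := ih (by omega) c' h2
      exact ⟨c'', h4, le_trans h3 h5⟩

end BRE

/-- a value `l` appears in the union of the bottom `i` rows of an
increasing tableau with `r` rows iff `l` is an excedance of `prom_{r-i}(T)`; in
particular the bottom-row entries are exactly the excedances of `prom_{r-1}(T)`. -/
theorem bottom_rows_are_excedances
    (lam : List ℕ) (hlam : IsPartition lam) (q : ℕ) (T : IncTab lam q) :
    (∀ i, 1 ≤ i → i < lam.length → ∀ l, 1 ≤ l → l ≤ q →
      ((∃ c : Cell, inShape lam c ∧ T.entry c = l ∧ lam.length - i ≤ c.1) ↔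
        ∃ j, j < l ∧ promEdge lam q (lam.length - i) T j l)) ∧
    (1 < lam.length → ∀ l, 1 ≤ l → l ≤ q →
      ((∃ c : Cell, inShape lam c ∧ T.entry c = l ∧ c.1 = lam.length - 1) ↔
        ∃ j, j < l ∧ promEdge lam q (lam.length - 1) T j l)) := by
  have main : ∀ i, 1 ≤ i → i < lam.length → ∀ l, 1 ≤ l → l ≤ q →
      ((∃ c : Cell, inShape lam c ∧ T.entry c = l ∧ lam.length - i ≤ c.1) ↔
        ∃ j, j < l ∧ promEdge lam q (lam.length - i) T j l) := by
    intro i hi1 hi2 l hl1 hlq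
    set k := lam.length - i with hkdef
    have hk1 : 1 ≤ k := by omega
    constructor
    · rintro ⟨c, hcs, hcl, hck⟩
      by_contra hno
      push_neg at hno
      have hdeep : ∀ m, m ≤ l - 1 → BRE.Deep k l (gromIter lam q T.entry m) := by
        intro m
        induction m with
        | zero => intro _; exact ⟨c, hcl, hck⟩
        | succ n ih =>
          intro hm
          have hD := ih (by omega)
          have hn : n % q = n := Nat.mod_eq_of_lt (by omega)
          have hsub : ∀ j, j ≤ q - 1 →
              BRE.Deep k l (iterSub lam q (n % q + 1) (gromIter lam q T.entry n) j) := by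
            intro j
            induction j with
            | zero => intro _; exact BRE.deep_base hk1 hD
            | succ m2 ihj =>
              intro hj
              rw [BRE.iterSub_succ]
              apply BRE.deep_substep hl1 hk1 ?_ (ihj (by omega))
              intro hwl hmv
              apply hno (n % q + 1) (by omega)
              refine ⟨by omega, by omega, m2, hj, hwl, ?_⟩
              have he : n % q + 1 - 1 = n := by omega
              rw [he]
              exact hmv
          have hfin := hsub (q-1) le_rfl
          show BRE.Deep k l (gromote lam q (n % q + 1) (gromIter lam q T.entry n))
          exact BRE.deep_refill hl1 hfin
      have hDL := hdeep (l-1) le_rfl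
      have hS : BRE.Stage lam q l (gromIter lam q T.entry (l-1)) := by
        have h := BRE.stage_iter hlam T (l-1) (by omega)
        rw [show l - 1 + 1 = l from by omega] at h
        exact h
      obtain ⟨c2, hc2, hkc2⟩ := hDL
      have hc2s : inShape lam c2 := by
        by_contra hns
        rw [hS.1 c2 hns] at hc2
        omega
      have hc2ne : c2 ≠ ((0,0) : Cell) := by
        intro h0
        rw [h0] at hkc2
        exact absurd hkc2 (by omega)
      exact absurd hc2 (BRE.stage_corner hlam hl1 hlq hS c2 hc2s hc2ne)
    · rintro ⟨j, hjl, hα1, hαq, j0, hj0, hcyc, hmv⟩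
      obtain ⟨b, hbul, hbk, hinC⟩ := hmv
      have hval : iterSub lam q j (gromIter lam q T.entry (j-1)) j0 (b.1 + 1, b.2) = l :=
        hinC.2.1
      obtain ⟨c', h1, h2⟩ := BRE.back_iter hl1 j0 _ hval
      obtain ⟨c'', h3, h4⟩ := BRE.back_grom hl1 (j-1) (by omega) c' h1
      have h2' : b.1 + 1 ≤ c'.1 := h2
      refine ⟨c'', ?_, h3, by omega⟩
      by_contra hns
      rw [T.zero_outside c'' hns] at h3
      omega
  refine ⟨main, ?_⟩
  intro hlen l hl1 hlq
  have hm := main 1 le_rfl hlen l hl1 hlq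
  constructor
  · rintro ⟨c, h1, h2, h3⟩
    exact hm.mp ⟨c, h1, h2, by omega⟩
  · intro h
    obtain ⟨c, h1, h2, h3⟩ := hm.mpr h
    refine ⟨c, h1, h2, ?_⟩
    have := BRE.inShape_row_lt h1
    omega
end
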